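/- arXiv:1405.5776 — 7 statements merged into one kernel-verified Lean document; each statement's English description precedes it below -/
import Mathlib

section
/- Let K be a number field and O an order in K. A nonzero prime ideal p of O is regular (i.e., the localization O_p is integrally closed) if and only if p is invertible as a fractional O-ideal. -/
open NumberField
open scoped nonZeroDivisors

set_option maxHeartbeats 1000000
set_option synthInstance.maxHeartbeats 400000

/-- An order in a number field `K`: a subring (`ℤ`-subalgebra) of `K` consisting of elements
integral over `ℤ` and spanning `K` over `ℚ` (equivalently, having an integral basis of length
`[K : ℚ]`). -/
structure IsOrder {K : Type*} [Field K] [NumberField K] (O : Subalgebra ℤ K) : Prop where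
  le : O ≤ integralClosure ℤ K
  spans : Submodule.span ℚ (O : Set K) = ⊤

/-- The conductor `f = {a ∈ O_K : a·O_K ⊆ O}` of an order `O`, as an ideal of `O`. -/
def condO {K : Type*} [Field K] [NumberField K] (O : Subalgebra ℤ K) : Ideal O where
  carrier := {x | ∀ b : 𝓞 K, (x : K) * (b : K) ∈ O}
  add_mem' := by
    intro x y hx hy b
    have := O.add_mem (hx b) (hy b)
    push_cast
    rw [add_mul]
    exact_mod_cast this
  zero_mem' := by intro b; push_cast; rw [zero_mul]; exact O.zero_mem
  smul_mem' := by
    intro c x hx b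
    have hc : (c : K) ∈ O := c.2
    have := O.mul_mem hc (hx b)
    simp only [smul_eq_mul]
    push_cast
    rw [mul_assoc]
    exact_mod_cast this

/-- The conductor `f = {a ∈ O_K : a·O_K ⊆ O}` of an order `O`, as an ideal of `O_K`. -/
def condOK {K : Type*} [Field K] [NumberField K] (O : Subalgebra ℤ K) : Ideal (𝓞 K) where
  carrier := {a | ∀ b : 𝓞 K, (a : K) * (b : K) ∈ O}
  add_mem' := by
    intro x y hx hy b
    have := O.add_mem (hx b) (hy b)
    push_cast
    rw [add_mul]
    exact this
  zero_mem' := by intro b; push_cast; rw [zero_mul]; exact O.zero_mem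
  smul_mem' := by
    intro c x hx b
    have := hx (c * b)
    simp only [smul_eq_mul]
    push_cast at this ⊢
    have h2 : (c : K) * ((x : K) * (b : K)) = (x : K) * ((c : K) * (b : K)) := by ring
    rw [mul_assoc, h2]
    exact this

section OrdAux

variable {K : Type*} [Field K] [NumberField K] {O : Subalgebra ℤ K} (hO : IsOrder O)
include hO

theorem Ord.isIntegral : Algebra.IsIntegral ℤ ↥O := by
  constructor
  intro x
  have hx : IsIntegral ℤ (x : K) := hO.le x.2
  exact (isIntegral_algHom_iff O.val Subtype.val_injective).mp hx

theorem Ord.noeth : IsNoetherian ℤ ↥O := by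
  have : IsNoetherian ℤ (𝓞 K) := inferInstance
  let f : ↥O →ₗ[ℤ] (𝓞 K) :=
    { toFun := fun x => ⟨x.1, hO.le x.2⟩
      map_add' := fun x y => rfl
      map_smul' := fun c x => rfl }
  have hf : Function.Injective f := by
    intro x y h
    exact Subtype.ext (congrArg Subtype.val h : _)
  exact isNoetherian_of_injective f hf

theorem Ord.noethRing : IsNoetherianRing ↥O :=
  isNoetherian_of_tower ℤ (Ord.noeth hO)

theorem Ord.dimLEOne : Ring.DimensionLEOne ↥O := by
  have := Ord.isIntegral hO
  constructor
  intro p hp hprime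
  have hcomap : p.comap (algebraMap ℤ ↥O) ≠ ⊥ := by
    obtain ⟨x, hx, hx0⟩ := Submodule.exists_mem_ne_zero_of_ne_bot hp
    exact Ideal.comap_ne_bot_of_integral_mem hx0 hx (Algebra.IsIntegral.isIntegral x)
  have : (p.comap (algebraMap ℤ ↥O)).IsMaximal :=
    (Ideal.comap_isPrime _ p).isMaximal hcomap
  exact Ideal.isMaximal_of_isIntegral_of_isMaximal_comap p this

theorem Ord.exists_int_smul (z : K) : ∃ n : ℤ, n ≠ 0 ∧ (n : K) * z ∈ O := by
  let T : Submodule ℚ K :=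
    { carrier := {z | ∃ n : ℤ, n ≠ 0 ∧ (n : K) * z ∈ O}
      add_mem' := by
        rintro a b ⟨m, hm, hma⟩ ⟨n, hn, hnb⟩
        refine ⟨m * n, mul_ne_zero hm hn, ?_⟩
        have h1 : ((m * n : ℤ) : K) * (a + b) = (n : K) * ((m : K) * a) + (m : K) * ((n : K) * b) := by
          push_cast; ring
        rw [h1]
        exact O.add_mem (O.mul_mem (O.intCast_mem n) hma) (O.mul_mem (O.intCast_mem m) hnb)
      zero_mem' := ⟨1, one_ne_zero, by simpa using O.zero_mem⟩
      smul_mem' := by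
        rintro q z ⟨n, hn, hz⟩
        refine ⟨q.den * n, mul_ne_zero (Int.natCast_ne_zero.mpr q.den_nz) hn, ?_⟩
        have h1 : (((q.den : ℤ) * n : ℤ) : K) * (q • z) = (q.num : K) * ((n : K) * z) := by
          have hq : ((q.den : ℤ) : K) ≠ 0 := by
            exact_mod_cast (Nat.cast_ne_zero (R := K)).mpr q.den_nz
          rw [Rat.smul_def, Rat.cast_def]
          push_cast at hq ⊢
          field_simp
        rw [h1]
        exact O.mul_mem (O.intCast_mem q.num) hz }
  have hT : z ∈ T := by
    have : (⊤ : Submodule ℚ K) ≤ T := by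
      rw [← hO.spans]
      exact Submodule.span_le.mpr (fun x hx => ⟨1, one_ne_zero, by simpa using hx⟩)
    exact this Submodule.mem_top
  exact hT

theorem Ord.isFractionRing : IsFractionRing ↥O K where
  map_units := by
    rintro ⟨y, hy⟩
    have hy0 : y ≠ 0 := nonZeroDivisors.ne_zero hy
    have h0 : (y : K) ≠ 0 := fun h => hy0 (Subtype.ext h)
    exact IsUnit.mk0 _ h0
  surj := by
    intro z
    obtain ⟨n, hn, hz⟩ := Ord.exists_int_smul hO z
    have hnO : (algebraMap ↥O K) (algebraMap ℤ ↥O n) = (n : K) := by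
      rw [← IsScalarTower.algebraMap_apply ℤ ↥O K]
      simp
    refine ⟨⟨⟨(n : K) * z, hz⟩, ⟨algebraMap ℤ ↥O n, mem_nonZeroDivisors_of_ne_zero ?_⟩⟩, ?_⟩
    · intro h
      apply hn
      have : (algebraMap ↥O K) (algebraMap ℤ ↥O n) = 0 := by rw [h]; rfl
      rw [hnO] at this
      exact_mod_cast this
    · show z * (algebraMap ↥O K (algebraMap ℤ ↥O n)) = (n : K) * z
      rw [mul_comm]
      exact congrArg (fun t => t * z) hnO
  exists_of_eq := by
    intro x y h
    exact ⟨1, by rw [Subtype.ext h]⟩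

end OrdAux

section LocAux


variable {A K : Type*} [CommRing A] [IsDomain A] [Field K] [Algebra A K] [IsFractionRing A K]
variable (p : Ideal A) [hp : p.IsPrime]

theorem L1 {J : FractionalIdeal A⁰ K} (hJ : (p : FractionalIdeal A⁰ K) * J = 1) :
    (IsLocalRing.maximalIdeal (Localization.AtPrime p)).IsPrincipal := by
  have h1 : ∃ a ∈ (p : FractionalIdeal A⁰ K), ∃ b ∈ J, a * b ∉ (p : FractionalIdeal A⁰ K) := by
    by_contra h
    push_neg at h
    have hle : (p : FractionalIdeal A⁰ K) * J ≤ (p : FractionalIdeal A⁰ K) :=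
      FractionalIdeal.mul_le.mpr h
    rw [hJ] at hle
    have h1p : (1 : K) ∈ (p : FractionalIdeal A⁰ K) := hle (FractionalIdeal.one_mem_one _)
    obtain ⟨x, hx, hx1⟩ := (FractionalIdeal.mem_coeIdeal _).mp h1p
    have : x = 1 := IsFractionRing.injective A K (by rw [hx1, _root_.map_one])
    exact hp.ne_top ((Ideal.eq_top_iff_one p).mpr (this ▸ hx))
  obtain ⟨a, ha, b, hb, hab⟩ := h1
  obtain ⟨a₀, ha₀p, rfl⟩ := (FractionalIdeal.mem_coeIdeal _).mp ha
  have habr : algebraMap A K a₀ * b ∈ (1 : FractionalIdeal A⁰ K) :=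
    hJ ▸ FractionalIdeal.mul_mem_mul ha hb
  obtain ⟨r, hr⟩ := (FractionalIdeal.mem_one_iff _).mp habr
  have hrp : r ∉ p := fun hrp => hab ((FractionalIdeal.mem_coeIdeal _).mpr ⟨r, hrp, hr⟩)
  set f := algebraMap A (Localization.AtPrime p) with hf
  refine ⟨⟨f a₀, ?_⟩⟩
  rw [← Localization.AtPrime.map_eq_maximalIdeal]
  apply le_antisymm
  · rw [Ideal.map_le_iff_le_comap]
    intro x hx
    have hxb : algebraMap A K x * b ∈ (1 : FractionalIdeal A⁰ K) :=
      hJ ▸ FractionalIdeal.mul_mem_mul ((FractionalIdeal.mem_coeIdeal _).mpr ⟨x, hx, rfl⟩) hb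
    obtain ⟨c, hc⟩ := (FractionalIdeal.mem_one_iff _).mp hxb
    have hxr : x * r = a₀ * c := by
      apply IsFractionRing.injective A K
      rw [map_mul, map_mul, hr, hc]
      ring
    obtain ⟨u, hu⟩ := (IsLocalization.AtPrime.isUnit_to_map_iff (Localization.AtPrime p) p r).mpr hrp
    show f x ∈ Ideal.span {f a₀}
    rw [Ideal.mem_span_singleton']
    refine ⟨f c * ↑u⁻¹, ?_⟩
    have h2 : f x * ↑u = f a₀ * f c := by rw [hu, ← map_mul, ← map_mul, hxr]
    calc f c * ↑u⁻¹ * f a₀ = f a₀ * f c * ↑u⁻¹ := by ring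
      _ = f x * ↑u * ↑u⁻¹ := by rw [h2]
      _ = f x := by rw [mul_assoc, Units.mul_inv, mul_one]
  · rw [Submodule.span_le, Set.singleton_subset_iff]
    exact Ideal.mem_map_of_mem f ha₀p

theorem L2 [IsNoetherianRing A] (h : (IsLocalRing.maximalIdeal (Localization.AtPrime p)).IsPrincipal) :
    IsIntegrallyClosed (Localization.AtPrime p) := by
  haveI : IsNoetherianRing (Localization.AtPrime p) :=
    IsLocalization.isNoetherianRing p.primeCompl _ inferInstance
  haveI : IsDedekindDomain (Localization.AtPrime p) :=
    ((tfae_of_isNoetherianRing_of_isLocalRing_of_isDomain (Localization.AtPrime p)).out 4 2).mp h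
  infer_instance

theorem L3 [IsNoetherianRing A] [Ring.DimensionLEOne A] (hp0 : p ≠ ⊥)
    (h : IsIntegrallyClosed (Localization.AtPrime p)) :
    ∃ J : FractionalIdeal A⁰ K, (p : FractionalIdeal A⁰ K) * J = 1 := by
  set Rp := Localization.AtPrime p with hRp
  set f := algebraMap A Rp with hf
  haveI : IsNoetherianRing Rp := IsLocalization.isNoetherianRing p.primeCompl _ inferInstance
  have hfinj : Function.Injective f :=
    IsLocalization.injective Rp p.primeCompl_le_nonZeroDivisors
  -- unique nonzero prime
  have huniq : ∀ P : Ideal Rp, P ≠ ⊥ → P.IsPrime → P = IsLocalRing.maximalIdeal Rp := by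
    intro P hP hPp
    haveI := hPp
    have hcom : (P.comap f).IsPrime := Ideal.comap_isPrime f P
    have hcb : P.comap f ≠ ⊥ := by
      intro hb
      apply hP
      have hmc : Ideal.map f (P.comap f) = P := IsLocalization.map_comap p.primeCompl Rp P
      rw [hb, Ideal.map_bot] at hmc
      exact hmc.symm
    have hle : P.comap f ≤ p := by
      have h1 : P ≤ IsLocalRing.maximalIdeal Rp := IsLocalRing.le_maximalIdeal hPp.ne_top
      have h2 := Ideal.comap_mono (f := f) h1
      exact h2.trans_eq Localization.AtPrime.comap_maximalIdeal
    have heq : P.comap f = p := (hcom.isMaximal hcb).eq_of_le hp.ne_top hle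
    calc P = Ideal.map f (P.comap f) := (IsLocalization.map_comap p.primeCompl Rp P).symm
      _ = Ideal.map f p := by rw [heq]
      _ = IsLocalRing.maximalIdeal Rp := Localization.AtPrime.map_eq_maximalIdeal
  have htfae := (tfae_of_isNoetherianRing_of_isLocalRing_of_isDomain Rp).out 3 4
  have hprin : (IsLocalRing.maximalIdeal Rp).IsPrincipal := htfae.mp ⟨h, huniq⟩
  obtain ⟨t, ht⟩ := hprin
  have htm : t ∈ Ideal.map f p := by
    rw [Localization.AtPrime.map_eq_maximalIdeal, ht]
    exact Submodule.mem_span_singleton_self t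
  obtain ⟨⟨y, s⟩, hys⟩ := (IsLocalization.mem_map_algebraMap_iff p.primeCompl Rp).mp htm
  -- hys : t * f s = f y, with y : p, s : primeCompl
  have hsunit : IsUnit (f (s : A)) :=
    (IsLocalization.AtPrime.isUnit_to_map_iff (Localization.AtPrime p) p ((s : A))).mpr s.2
  obtain ⟨us, hus⟩ := hsunit
  have hfy : Ideal.span {f (y : A)} = Ideal.map f p := by
    apply le_antisymm
    · rw [Ideal.span_le, Set.singleton_subset_iff]
      exact Ideal.mem_map_of_mem f y.2
    · rw [Localization.AtPrime.map_eq_maximalIdeal, ht, Submodule.span_le,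
        Set.singleton_subset_iff]
      have htval : t = f (y : A) * ↑us⁻¹ := by
        rw [← hys, ← hus, mul_assoc, Units.mul_inv, mul_one]
      rw [htval]
      exact Ideal.mul_mem_right _ _ (Submodule.mem_span_singleton_self _)
  have hy0 : (y : A) ≠ 0 := by
    intro h0
    apply hp0
    have hb : Ideal.map f p = ⊥ := by
      rw [← hfy, h0, map_zero, Ideal.span_singleton_eq_bot.mpr rfl]
    rw [eq_bot_iff]
    intro x hx
    have : f x = 0 := by
      have := Ideal.mem_map_of_mem f hx
      rwa [hb, Ideal.mem_bot] at this
    have : x = 0 := hfinj (by rw [this, map_zero])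
    simpa [this]
  obtain ⟨T, hT⟩ : p.FG := IsNoetherian.noetherian p
  have key : ∀ x ∈ T, ∃ (c : A) (s' : p.primeCompl), x * s' = (y : A) * c := by
    intro x hx
    have hxp : x ∈ p := by rw [← hT]; exact Ideal.subset_span hx
    have hxm : f x ∈ Ideal.span {f (y : A)} := by
      rw [hfy]; exact Ideal.mem_map_of_mem f hxp
    obtain ⟨d, hd⟩ := Ideal.mem_span_singleton'.mp hxm
    obtain ⟨⟨c, s'⟩, hcs⟩ := IsLocalization.surj p.primeCompl d
    refine ⟨c, s', hfinj ?_⟩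
    rw [map_mul, map_mul]
    calc f x * f (s' : A) = d * f (y : A) * f (s' : A) := by rw [hd]
      _ = f (y : A) * (d * f (s' : A)) := by ring
      _ = f (y : A) * f c := by rw [hcs]
  choose cc ss hcs using key
  set S : p.primeCompl := ∏ x ∈ T.attach, ss x x.2 with hS
  have hSp : (S : A) ∉ p := S.2
  -- each x ∈ T : S * x ∈ span {y}
  classical
  have hmul : ∀ x ∈ T, (S : A) * x ∈ Ideal.span {(y : A)} := by
    intro x hx
    have hSx : (S : A) = (ss x hx : A) * ∏ z ∈ T.attach.erase ⟨x, hx⟩, (ss z z.2 : A) := by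
      rw [hS]
      push_cast
      exact (Finset.mul_prod_erase T.attach _ (Finset.mem_attach T ⟨x, hx⟩)).symm
    rw [Ideal.mem_span_singleton]
    refine ⟨cc x hx * ∏ z ∈ T.attach.erase ⟨x, hx⟩, (ss z z.2 : A), ?_⟩
    calc (S : A) * x = (x * (ss x hx : A)) * ∏ z ∈ T.attach.erase ⟨x, hx⟩, (ss z z.2 : A) := by
          rw [hSx]; ring
      _ = ((y : A) * cc x hx) * ∏ z ∈ T.attach.erase ⟨x, hx⟩, (ss z z.2 : A) := by
          rw [hcs x hx]
      _ = (y : A) * (cc x hx * ∏ z ∈ T.attach.erase ⟨x, hx⟩, (ss z z.2 : A)) := by ring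
  -- the element g = s/y of K
  have hyK : algebraMap A K (y : A) ≠ 0 :=
    (map_ne_zero_iff _ (IsFractionRing.injective A K)).mpr hy0
  set g : K := algebraMap A K (S : A) * (algebraMap A K (y : A))⁻¹ with hg
  set P : FractionalIdeal A⁰ K := (p : FractionalIdeal A⁰ K) with hP
  have hP0 : P ≠ 0 := FractionalIdeal.coeIdeal_ne_zero.mpr hp0
  have hSall : ∀ x ∈ p, (S : A) * x ∈ Ideal.span {(y : A)} := by
    intro x hx
    rw [← hT] at hx
    refine Submodule.span_induction ?_ ?_ ?_ ?_ hx
    · exact fun z hz => hmul z hz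
    · simpa using Ideal.zero_mem (Ideal.span {(y : A)})
    · intro a b _ _ ha hb
      rw [mul_add]; exact Ideal.add_mem _ ha hb
    · intro a b _ hb
      rw [smul_eq_mul]
      have h3 : (S : A) * (a * b) = a * ((S : A) * b) := by ring
      rw [h3]
      exact Ideal.mul_mem_left _ _ hb
  have hdiv : ∀ x ∈ p, g * algebraMap A K x ∈ (1 : FractionalIdeal A⁰ K) := by
    intro x hx
    obtain ⟨e, he⟩ := Ideal.mem_span_singleton'.mp (hSall x hx)
    rw [FractionalIdeal.mem_one_iff]
    refine ⟨e, ?_⟩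
    have h2 : algebraMap A K e * algebraMap A K (y : A)
        = algebraMap A K (S : A) * algebraMap A K x := by
      rw [← map_mul, ← map_mul, he]
    rw [hg]
    field_simp
    linear_combination h2
  have hgmem : g ∈ (1 : FractionalIdeal A⁰ K) / P := by
    rw [FractionalIdeal.mem_div_iff_of_ne_zero hP0]
    intro z hz
    obtain ⟨x, hxp, rfl⟩ := (FractionalIdeal.mem_coeIdeal _).mp hz
    exact hdiv x hxp
  set I := P * ((1 : FractionalIdeal A⁰ K) / P) with hI
  have hI1 : I ≤ 1 := by
    rw [hI, FractionalIdeal.mul_le]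
    intro i hi j hj
    have := (FractionalIdeal.mem_div_iff_of_ne_zero hP0).mp hj i hi
    rwa [mul_comm] at this
  obtain ⟨I₀, hI₀⟩ := FractionalIdeal.le_one_iff_exists_coeIdeal.mp hI1
  have hsI : (S : A) ∈ I₀ := by
    have hmem : algebraMap A K (S : A) ∈ I := by
      have heq : algebraMap A K (S : A) = algebraMap A K (y : A) * g := by
        rw [hg]; field_simp
      rw [heq, hI]
      exact FractionalIdeal.mul_mem_mul ((FractionalIdeal.mem_coeIdeal _).mpr ⟨y, y.2, rfl⟩) hgmem
    rw [← hI₀] at hmem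
    obtain ⟨w, hw, hws⟩ := (FractionalIdeal.mem_coeIdeal _).mp hmem
    rwa [IsFractionRing.injective A K hws] at hw
  have hpI : p ≤ I₀ := by
    have h1le : (1 : FractionalIdeal A⁰ K) ≤ 1 / P := by
      rw [FractionalIdeal.le_div_iff_mul_le hP0, one_mul]
      exact FractionalIdeal.coeIdeal_le_one
    have hPle : P ≤ I := by
      have := mul_le_mul' (le_refl P) h1le
      simpa [hI, mul_one] using this
    rw [← hI₀] at hPle
    exact (FractionalIdeal.coeIdeal_le_coeIdeal K).mp hPle
  have hpm : p.IsMaximal := hp.isMaximal hp0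
  have htop : I₀ = ⊤ := by
    by_contra hne
    exact hSp ((hpm.eq_of_le hne hpI) ▸ hsI)
  refine ⟨1 / P, ?_⟩
  show P * (1 / P) = 1
  rw [← hI, ← hI₀, htop]
  exact FractionalIdeal.coeIdeal_top _

end LocAux

/-- A nonzero prime ideal `p` of an order `O` in a number field `K` is regular
(the localization `O_p` is integrally closed) if and only if `p` is invertible as a fractional
`O`-ideal. -/
theorem regular_iff_invertible {K : Type*} [Field K] [NumberField K]
    (O : Subalgebra ℤ K) (hO : IsOrder O)
    (p : Ideal O) [hp : p.IsPrime] (hp0 : p ≠ ⊥) :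
    IsIntegrallyClosed (Localization.AtPrime p) ↔
      ∃ J : FractionalIdeal (↥O)⁰ K, (p : FractionalIdeal (↥O)⁰ K) * J = 1 := by
  haveI : IsFractionRing ↥O K := Ord.isFractionRing hO
  haveI : IsNoetherianRing ↥O := Ord.noethRing hO
  haveI : Ring.DimensionLEOne ↥O := Ord.dimLEOne hO
  constructor
  · exact fun h => L3 p hp0 h
  · rintro ⟨J, hJ⟩
    exact L2 p (L1 p hJ)
end

section
/- Let O be an order in a number field K with conductor f. Then K_{f,1} = {α/β : α, β ∈ O_K, both generating ideals coprime to f, and α ≡ β (mod f)}. -/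
open NumberField
open scoped nonZeroDivisors

set_option maxHeartbeats 1000000
set_option synthInstance.maxHeartbeats 400000

/-- `α ≡* 1 (mod f)`: for every prime `P` dividing `f`, `α - 1 ∈ f·(O_K)_P`,
i.e. `v_P(α - 1) ≥ v_P(f)` for all primes `P` dividing `f`. -/
def EquivStarOne {K : Type*} [Field K] [NumberField K] (f : Ideal (𝓞 K)) (x : K) : Prop :=
  ∀ P : Ideal (𝓞 K), P.IsPrime → f ≤ P →
    ∃ a ∈ f, ∃ b : 𝓞 K, b ∉ P ∧ x - 1 = (a : K) / (b : K)

/-- `K_f`: quotients `α/β` of elements of `O_K` whose generated ideals are coprime to `f`. -/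
def Kf {K : Type*} [Field K] [NumberField K] (f : Ideal (𝓞 K)) : Set K :=
  {x | ∃ a b : 𝓞 K, Ideal.span {a} ⊔ f = ⊤ ∧ Ideal.span {b} ⊔ f = ⊤ ∧
    x = (a : K) / (b : K)}

/-- `K_{f,1} = {α ∈ K_f : α ≡* 1 (mod f)}`. -/
def Kf1 {K : Type*} [Field K] [NumberField K] (f : Ideal (𝓞 K)) : Set K :=
  {x | x ∈ Kf f ∧ EquivStarOne f x}

/-- `K_{f,1}` consists exactly of the quotients `α/β` with `α, β ∈ O_K`
generating ideals coprime to `f` and `α ≡ β (mod f)`, where `f` is the conductor of the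
order `O`. -/
theorem kf1_eq_quotients_congruent {K : Type*} [Field K] [NumberField K]
    (O : Subalgebra ℤ K) (hO : IsOrder O) :
    Kf1 (condOK O) =
      {x : K | ∃ a b : 𝓞 K, Ideal.span {a} ⊔ condOK O = ⊤ ∧
        Ideal.span {b} ⊔ condOK O = ⊤ ∧ a - b ∈ condOK O ∧ x = (a : K) / (b : K)} := by
  set f := condOK O with hf
  ext x
  constructor
  · rintro ⟨⟨a, b, ha, hb, rfl⟩, hstar⟩
    refine ⟨a, b, ha, hb, ?_, rfl⟩
    by_contra hab
    obtain ⟨M, hM, hIM⟩ := Ideal.exists_le_maximal (f.colon (Ideal.span {a - b}))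
      (fun htop => hab (by simpa [Ideal.mem_colon_span_singleton] using
        (Ideal.eq_top_iff_one _).mp htop))
    have hfM : f ≤ M := le_trans (fun r hr => Ideal.mem_colon_span_singleton.mpr
      (Ideal.mul_mem_right _ _ hr)) hIM
    obtain ⟨c, hc, d, hdM, heq⟩ := hstar M hM.isPrime hfM
    have hb0 : b ≠ 0 := by
      rintro rfl
      exact hM.ne_top (top_le_iff.mp (by
        rw [← hb, Ideal.span_singleton_eq_bot.mpr rfl, bot_sup_eq]; exact hfM))
    have hbK : (b : K) ≠ 0 := by
      simpa using (RingOfIntegers.coe_injective (K := K)).ne hb0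
    have hd0 : d ≠ 0 := fun h => hdM (h ▸ M.zero_mem)
    have hdK : (d : K) ≠ 0 := by
      simpa using (RingOfIntegers.coe_injective (K := K)).ne hd0
    have hkey : ((d * (a - b) : 𝓞 K) : K) = ((b * c : 𝓞 K) : K) := by
      push_cast
      field_simp at heq
      linear_combination heq
    have hmem : d * (a - b) ∈ f := by
      rw [RingOfIntegers.coe_injective hkey]
      exact Ideal.mul_mem_left _ _ hc
    exact hdM (hIM (Ideal.mem_colon_span_singleton.mpr hmem))
  · rintro ⟨a, b, ha, hb, hab, rfl⟩
    refine ⟨⟨a, b, ha, hb, rfl⟩, ?_⟩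
    intro P hP hfP
    have hb0 : b ≠ 0 := by
      rintro rfl
      exact hP.ne_top (top_le_iff.mp (by
        rw [← hb, Ideal.span_singleton_eq_bot.mpr rfl, bot_sup_eq]; exact hfP))
    have hbK : (b : K) ≠ 0 := by
      simpa using (RingOfIntegers.coe_injective (K := K)).ne hb0
    have hbP : b ∉ P := fun hbP => hP.ne_top (top_le_iff.mp (by
      rw [← hb]; exact sup_le ((Ideal.span_singleton_le_iff_mem _).mpr hbP) hfP))
    refine ⟨a - b, hab, b, hbP, ?_⟩
    push_cast
    field_simp
end

section
/- Let O be an order in a number field K with conductor f. Then K_{f,1} ⊆ K_{f,O} and O_K^× ∩ K_{f,O} = O^×, where K_{f,O} = {α/β : α, β ∈ O both generating O-ideals coprime to f} and K_{f,1} = {α/β : α, β ∈ O_K coprime to f and α ≡ β mod f}. -/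
open NumberField
open scoped nonZeroDivisors

set_option maxHeartbeats 1000000
set_option synthInstance.maxHeartbeats 400000

/-- `K_{f,O}`: quotients `α/β` with `α, β ∈ O` generating `O`-ideals coprime to the
conductor `f`. -/
def KfO {K : Type*} [Field K] [NumberField K] (O : Subalgebra ℤ K) : Set K :=
  {x | ∃ a b : O, Ideal.span {a} ⊔ condO O = ⊤ ∧ Ideal.span {b} ⊔ condO O = ⊤ ∧
    x = (a : K) / (b : K)}


section KfAux

variable {K : Type*} [Field K] [NumberField K] {O : Subalgebra ℤ K}

lemma condO_spec {x : O} (h : x ∈ condO O) (b : 𝓞 K) : (x : K) * (b : K) ∈ O := h b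

lemma condOK_spec {a : 𝓞 K} (h : a ∈ condOK O) (b : 𝓞 K) : (a : K) * (b : K) ∈ O := h b

lemma span_sup_condO_eq_top (c : O) (h : ∀ m : 𝓞 K, ((c : K) - 1) * (m : K) ∈ O) :
    Ideal.span {c} ⊔ condO O = ⊤ := by
  rw [Ideal.eq_top_iff_one]
  have h1 : (1 - c : O) ∈ condO O := by
    intro m
    have h2 := O.neg_mem (h m)
    have e : ((1 - c : O) : K) * (m : K) = -(((c : K) - 1) * (m : K)) := by
      push_cast; ring
    rw [e]; exact h2
  have := Submodule.add_mem_sup (Ideal.mem_span_singleton_self c) h1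
  simpa using this

lemma claimA {c z : O} (hc : Ideal.span {c} ⊔ condO O = ⊤) (m : 𝓞 K)
    (hz : (z : K) = (c : K) * (m : K)) : ∃ w : O, z = c * w := by
  have h1 : (1 : O) ∈ Ideal.span {c} ⊔ condO O := hc ▸ Submodule.mem_top
  obtain ⟨y, hy, t, ht, hyt⟩ := Submodule.mem_sup.mp h1
  obtain ⟨u, hu⟩ := Ideal.mem_span_singleton'.mp hy
  obtain ⟨mt, hmt⟩ : ∃ mt : O, (mt : K) = (t : K) * (m : K) := ⟨⟨_, condO_spec ht m⟩, rfl⟩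
  refine ⟨z * u + mt, ?_⟩
  apply Subtype.ext
  have hyt' : (y : K) + (t : K) = 1 := by exact_mod_cast congrArg Subtype.val hyt
  have hu' : (u : K) * (c : K) = (y : K) := by exact_mod_cast congrArg Subtype.val hu
  push_cast [hmt]
  linear_combination (-(z : K)) * hyt' + (-(z : K)) * hu' + (t : K) * hz

lemma mem_of_locally {f : Ideal (𝓞 K)} {z : 𝓞 K}
    (h : ∀ P : Ideal (𝓞 K), P.IsPrime → f ≤ P → ∃ c : 𝓞 K, c ∉ P ∧ z * c ∈ f) : z ∈ f := by
  set J := f.colon (Ideal.span {z}) with hJdef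
  have hle : f ≤ J := fun t ht => Submodule.mem_colon_span_singleton.mpr (by
    rw [smul_eq_mul]; exact f.mul_mem_right z ht)
  by_cases hJ : J = ⊤
  · have h1 : (1 : 𝓞 K) ∈ J := hJ ▸ Submodule.mem_top
    have h2 := Submodule.mem_colon_span_singleton.mp h1
    simpa using h2
  · obtain ⟨M, hM, hJM⟩ := Ideal.exists_le_maximal J hJ
    obtain ⟨c, hcM, hcz⟩ := h M hM.isPrime (le_trans hle hJM)
    exact absurd (hJM (Submodule.mem_colon_span_singleton.mpr
      (by rw [smul_eq_mul, mul_comm]; exact hcz))) hcM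

lemma exists_O_of_congruent_one {w : 𝓞 K} (hw : w - 1 ∈ condOK O) :
    ∃ c : O, (c : K) = (w : K) ∧ Ideal.span {c} ⊔ condO O = ⊤ := by
  have hwm : ∀ m : 𝓞 K, ((w : K) - 1) * (m : K) ∈ O := by
    intro m
    have h2 := condOK_spec hw m
    have e : ((w - 1 : 𝓞 K) : K) = (w : K) - 1 := by push_cast; ring
    rwa [e] at h2
  have hwO : (w : K) ∈ O := by
    have h1 := hwm 1
    rw [show ((1 : 𝓞 K) : K) = (1 : K) by push_cast; ring, mul_one] at h1
    have h2 := O.add_mem h1 O.one_mem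
    simpa using h2
  exact ⟨⟨(w : K), hwO⟩, rfl, span_sup_condO_eq_top _ hwm⟩

lemma exists_unit_O {y z : K} (hy : y ∈ O) (hz : z ∈ O) (h : y * z = 1) :
    ∃ u : (↥O)ˣ, ((u : O) : K) = y := by
  refine ⟨⟨⟨y, hy⟩, ⟨z, hz⟩, ?_, ?_⟩, rfl⟩
  · apply Subtype.ext; push_cast; exact h
  · apply Subtype.ext; push_cast; rw [mul_comm]; exact h

lemma exists_unit_OK {y z : K} (hy : y ∈ integralClosure ℤ K) (hz : z ∈ integralClosure ℤ K)
    (h : y * z = 1) : ∃ u : (𝓞 K)ˣ, ((u : 𝓞 K) : K) = y := by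
  refine ⟨⟨⟨y, hy⟩, ⟨z, hz⟩, ?_, ?_⟩, rfl⟩
  · apply NumberField.RingOfIntegers.ext; push_cast; exact h
  · apply NumberField.RingOfIntegers.ext; show z * y = 1; rw [mul_comm]; exact h

end KfAux

/-- `K_{f,1} ⊆ K_{f,O}` and `O_K^× ∩ K_{f,O} = O^×`. -/
theorem kf1_subset_kfO_and_units_inter {K : Type*} [Field K] [NumberField K]
    (O : Subalgebra ℤ K) (hO : IsOrder O) :
    Kf1 (condOK O) ⊆ KfO O ∧
    {x : K | ∃ u : (𝓞 K)ˣ, ((u : 𝓞 K) : K) = x} ∩ KfO O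
      = {x : K | ∃ u : (↥O)ˣ, ((u : O) : K) = x} := by
  constructor
  · rintro x ⟨⟨α, β, hα, hβ, hxab⟩, hx1⟩
    by_cases hf : condOK O = ⊤
    · have hall : ∀ m : 𝓞 K, (m : K) ∈ O := by
        intro m
        have h1 : (1 : 𝓞 K) ∈ condOK O := hf ▸ Submodule.mem_top
        have h2 := condOK_spec h1 m
        simpa using h2
      have hcond : condO O = ⊤ := by
        rw [Ideal.eq_top_iff_one]
        intro b
        have h2 := hall b
        simpa using h2
      exact ⟨⟨(α : K), hall α⟩, ⟨(β : K), hall β⟩,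
        by rw [hcond]; exact sup_top_eq _, by rw [hcond]; exact sup_top_eq _, hxab⟩
    · have hβ0 : (β : K) ≠ 0 := by
        intro h0
        have hb : β = 0 := NumberField.RingOfIntegers.ext (by simpa using h0)
        rw [hb] at hβ
        rw [show Ideal.span {(0 : 𝓞 K)} = ⊥ from Ideal.span_singleton_eq_bot.mpr rfl,
          bot_sup_eq] at hβ
        exact hf hβ
      obtain ⟨y, hy, t, ht, hyt⟩ := Submodule.mem_sup.mp
        (show (1 : 𝓞 K) ∈ Ideal.span {β} ⊔ condOK O from hβ ▸ Submodule.mem_top)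
      obtain ⟨u, hu⟩ := Ideal.mem_span_singleton'.mp hy
      set δ : 𝓞 K := β * u with hδdef
      set γ : 𝓞 K := α * u with hγdef
      have hδ1 : δ - 1 ∈ condOK O := by
        have e : δ - 1 = -t := by rw [hδdef, mul_comm, hu, ← hyt]; ring
        rw [e]; exact (condOK O).neg_mem ht
      have hz' : γ - δ ∈ condOK O := by
        apply mem_of_locally
        intro P hP hfP
        obtain ⟨a, haf, b, hbP, hxe⟩ := hx1 P hP hfP
        refine ⟨b, hbP, ?_⟩
        have hb0 : (b : K) ≠ 0 := by
          intro h0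
          exact hbP ((NumberField.RingOfIntegers.ext (by simpa using h0) : b = 0) ▸ P.zero_mem)
        have key : ((γ - δ) * b : 𝓞 K) = δ * a := by
          apply NumberField.RingOfIntegers.ext
          have h1 : (a : K) = (x - 1) * (b : K) := (div_eq_iff hb0).mp hxe.symm
          have h2 : x * (β : K) = (α : K) := by rw [hxab]; exact div_mul_cancel₀ _ hβ0
          push_cast [hγdef, hδdef]
          linear_combination (-(β : K) * (u : K)) * h1 + (-(u : K) * (b : K)) * h2
        rw [key]
        exact (condOK O).mul_mem_left δ haf
      have hγ1 : γ - 1 ∈ condOK O := by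
        have e : γ - 1 = (γ - δ) + (δ - 1) := by ring
        rw [e]; exact (condOK O).add_mem hz' hδ1
      obtain ⟨cγ, hcγ, hcopγ⟩ := exists_O_of_congruent_one (O := O) hγ1
      obtain ⟨cδ, hcδ, hcopδ⟩ := exists_O_of_congruent_one (O := O) hδ1
      refine ⟨cγ, cδ, hcopγ, hcopδ, ?_⟩
      have hδ0 : (δ : K) ≠ 0 := by
        intro h0
        apply hf
        rw [Ideal.eq_top_iff_one]
        have h1 : δ = 0 := NumberField.RingOfIntegers.ext (by simpa using h0)
        have h2 := (condOK O).neg_mem hδ1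
        rw [h1] at h2
        simpa using h2
      rw [hcγ, hcδ, hxab, div_eq_div_iff hβ0 hδ0]
      push_cast [hγdef, hδdef]
      ring
  · ext x
    simp only [Set.mem_inter_iff, Set.mem_setOf_eq]
    constructor
    · rintro ⟨⟨u, hu⟩, a, b, ha, hb, hx⟩
      have hmul : ((u : 𝓞 K) : K) * (((u⁻¹ : (𝓞 K)ˣ) : 𝓞 K) : K) = 1 := by
        have h1 := congrArg (algebraMap (𝓞 K) K) u.mul_inv
        simpa using h1
      by_cases hcond : condO O = ⊤
      · have hall : ∀ m : 𝓞 K, (m : K) ∈ O := by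
          intro m
          have h1 : (1 : O) ∈ condO O := hcond ▸ Submodule.mem_top
          have h2 := condO_spec h1 m
          simpa using h2
        obtain ⟨w, hw⟩ := exists_unit_O (O := O) (hall _) (hall _) hmul
        exact ⟨w, by rw [hw, hu]⟩
      · have hb0 : (b : K) ≠ 0 := by
          intro h0
          have hbz : b = 0 := Subtype.ext h0
          rw [hbz, show Ideal.span {(0 : O)} = ⊥ from Ideal.span_singleton_eq_bot.mpr rfl,
            bot_sup_eq] at hb
          exact hcond hb
        have hmulx : x * (((u⁻¹ : (𝓞 K)ˣ) : 𝓞 K) : K) = 1 := by rw [← hu]; exact hmul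
        have hx0 : x ≠ 0 := by
          intro h0; rw [h0, zero_mul] at hmulx; exact zero_ne_one hmulx
        have hxa : x * (b : K) = (a : K) := by
          rw [hx]; field_simp
        obtain ⟨w, hw⟩ := claimA (z := a) hb (u : 𝓞 K)
          (by rw [hu]; linear_combination -hxa)
        obtain ⟨v, hv⟩ := claimA (z := b) ha ((u⁻¹ : (𝓞 K)ˣ) : 𝓞 K)
          (by linear_combination (-(b : K)) * hmulx + (((u⁻¹ : (𝓞 K)ˣ) : 𝓞 K) : K) * hxa)
        have ha0 : (a : K) ≠ 0 := by rw [← hxa]; exact mul_ne_zero hx0 hb0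
        have hwK : (a : K) = (b : K) * (w : K) := by exact_mod_cast congrArg Subtype.val hw
        have hvK : (b : K) = (a : K) * (v : K) := by exact_mod_cast congrArg Subtype.val hv
        have h3 : (a : K) * ((w : K) * (v : K) - 1) = 0 := by
          linear_combination (-(w : K)) * hvK + (-1 : K) * hwK
        have hvw : (w : K) * (v : K) = 1 := by
          rcases mul_eq_zero.mp h3 with h | h
          · exact absurd h ha0
          · exact sub_eq_zero.mp h
        obtain ⟨w', hw'⟩ := exists_unit_O (O := O) w.2 v.2 hvw
        have hxw : (w : K) = x := by
          have h4 : (b : K) * (w : K) = (b : K) * x := by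
            rw [← hwK, ← hxa]; ring
          exact (mul_left_cancel₀ hb0 h4)
        exact ⟨w', by rw [hw', hxw]⟩
    · rintro ⟨u, hu⟩
      have hmulO : ((u : O) : K) * (((u⁻¹ : (↥O)ˣ) : O) : K) = 1 := by
        have h1 := congrArg Subtype.val u.mul_inv
        exact_mod_cast h1
      refine ⟨?_, (u : O), 1, ?_, ?_, ?_⟩
      · obtain ⟨w, hw⟩ := exists_unit_OK (hO.le (u : O).2) (hO.le ((u⁻¹ : (↥O)ˣ) : O).2) hmulO
        exact ⟨w, by rw [hw, hu]⟩
      · rw [Ideal.span_singleton_eq_top.mpr u.isUnit]; exact top_sup_eq _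
      · rw [Ideal.span_singleton_one]; exact top_sup_eq _
      · rw [← hu]; simp
end

section
/- Let O be an order in a number field K with conductor f, and let H_O be the ring class field of O (the unique abelian extension of K unramified outside f whose Artin map on J_K^f has kernel P_{K,O}^f). Let P be a prime ideal of O_K coprime to f. Then P splits completely in H_O if and only if P = αO_K for some α ∈ O. -/
open NumberField
open scoped nonZeroDivisors

set_option maxHeartbeats 1000000
set_option synthInstance.maxHeartbeats 400000

/-- `J_K^f`: the subgroup of fractional `O_K`-ideals generated by the prime ideals of `O_K`
not dividing the conductor `f` of the order `O`. -/
noncomputable def JKf {K : Type*} [Field K] [NumberField K] (O : Subalgebra ℤ K) :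
    Subgroup (FractionalIdeal (𝓞 K)⁰ K)ˣ :=
  Subgroup.closure
    {u | ∃ P : Ideal (𝓞 K), P.IsPrime ∧ P ≠ ⊥ ∧ ¬ condOK O ≤ P ∧
      (u : FractionalIdeal (𝓞 K)⁰ K) = P}

/-- `P_{K,1}^f`: the group of principal fractional ideals `α·O_K` with `α ∈ K_{f,1}`. -/
noncomputable def PK1f {K : Type*} [Field K] [NumberField K] (O : Subalgebra ℤ K) :
    Subgroup (FractionalIdeal (𝓞 K)⁰ K)ˣ :=
  Subgroup.closure
    {u | ∃ x ∈ Kf1 (condOK O),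
      (u : FractionalIdeal (𝓞 K)⁰ K) = FractionalIdeal.spanSingleton (𝓞 K)⁰ x}

/-- `P_{K,O}^f`: the subgroup generated by the principal ideals `α·O_K` with `α ∈ O` and
`α·O + f = O`. -/
noncomputable def PKOf {K : Type*} [Field K] [NumberField K] (O : Subalgebra ℤ K) :
    Subgroup (FractionalIdeal (𝓞 K)⁰ K)ˣ :=
  Subgroup.closure
    {u | ∃ α : O, Ideal.span {α} ⊔ condO O = ⊤ ∧
      (u : FractionalIdeal (𝓞 K)⁰ K) = FractionalIdeal.spanSingleton (𝓞 K)⁰ (α : K)}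

/-- A (nonzero) prime ideal `p` splits completely along a ring extension `g : A → B` if the
ramification index and inertia degree of every prime of `B` lying over `p` are `1`. -/
def SplitsCompletely {A B : Type*} [CommRing A] [CommRing B] (g : A →+* B)
    (p : Ideal A) : Prop :=
  Ideal.map g p ≠ ⊤ ∧
    ∀ Q : Ideal B, Q.IsPrime → Q ≠ ⊥ → Ideal.comap g Q = p →
      letI := g.toAlgebra
      Ideal.ramificationIdx' p Q = 1 ∧ Ideal.inertiaDeg' p Q = 1

section Aux

variable {K : Type*} [Field K] [NumberField K] (O : Subalgebra ℤ K)

lemma coe_intCast_OK {K : Type*} [Field K] [NumberField K] (z : ℤ) :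
    ((z : 𝓞 K) : K) = (z : K) := map_intCast (algebraMap (𝓞 K) K) z

lemma mem_condOK_iff {x : 𝓞 K} :
    x ∈ condOK O ↔ ∀ b : 𝓞 K, (x : K) * (b : K) ∈ O := Iff.rfl

lemma mem_condO_iff {x : O} :
    x ∈ condO O ↔ ∀ b : 𝓞 K, (x : K) * (b : K) ∈ O := Iff.rfl

/-- A general commutative-ring lemma: coprimality to an ideal is preserved by products. -/
lemma span_singleton_mul_sup_eq_top {R : Type*} [CommRing R] {a b : R} {I : Ideal R}
    (ha : Ideal.span {a} ⊔ I = ⊤) (hb : Ideal.span {b} ⊔ I = ⊤) :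
    Ideal.span {a * b} ⊔ I = ⊤ := by
  rw [Ideal.eq_top_iff_one] at ha hb ⊢
  obtain ⟨x, hx, i, hi, hxi⟩ := Submodule.mem_sup.mp ha
  obtain ⟨y, hy, j, hj, hyj⟩ := Submodule.mem_sup.mp hb
  obtain ⟨s, rfl⟩ := Ideal.mem_span_singleton'.mp hx
  obtain ⟨t, rfl⟩ := Ideal.mem_span_singleton'.mp hy
  refine Submodule.mem_sup.mpr ⟨(s * t) * (a * b),
    Ideal.mem_span_singleton'.mpr ⟨s * t, rfl⟩,
    s * a * j + i * (t * b) + i * j, ?_, ?_⟩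
  · exact add_mem (add_mem (I.mul_mem_left _ hj) (I.mul_mem_right _ hi)) (I.mul_mem_left _ hj)
  · linear_combination (t * b + j) * hxi + hyj

/-- For any `x : K` there is a nonzero integer `m` with `m * x ∈ O`. -/
lemma exists_int_mul_mem (hO : IsOrder O) (x : K) :
    ∃ m : ℤ, m ≠ 0 ∧ (m : K) * x ∈ O := by
  have hx : x ∈ Submodule.span ℚ (O : Set K) := by rw [hO.spans]; trivial
  induction hx using Submodule.span_induction with
  | mem y hy => exact ⟨1, one_ne_zero, by simpa using hy⟩
  | zero => exact ⟨1, one_ne_zero, by simpa using O.zero_mem⟩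
  | add y z _ _ ihy ihz =>
      obtain ⟨m, hm, hmy⟩ := ihy
      obtain ⟨n, hn, hnz⟩ := ihz
      refine ⟨m * n, mul_ne_zero hm hn, ?_⟩
      have : ((m * n : ℤ) : K) * (y + z) = (n : K) * ((m : K) * y) + (m : K) * ((n : K) * z) := by
        push_cast; ring
      rw [this]
      exact O.add_mem (O.mul_mem (O.intCast_mem n) hmy) (O.mul_mem (O.intCast_mem m) hnz)
  | smul q y _ ih =>
      obtain ⟨m, hm, hmy⟩ := ih
      refine ⟨(q.den : ℤ) * m, mul_ne_zero (Int.natCast_ne_zero.mpr q.den_nz) hm, ?_⟩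
      have hden : ((q.den : ℤ) : K) * (q : K) = ((q.num : ℤ) : K) := by
        push_cast
        rw [mul_comm]
        exact_mod_cast Rat.mul_den_eq_num q
      have : (((q.den : ℤ) * m : ℤ) : K) * (q • y)
          = ((q.num : ℤ) : K) * ((m : K) * y) := by
        rw [Rat.smul_def]
        push_cast at hden ⊢
        calc (q.den : K) * (m : K) * ((q : K) * y)
            = ((q.den : K) * (q : K)) * ((m : K) * y) := by ring
          _ = (q.num : K) * ((m : K) * y) := by rw [hden]
      rw [this]
      exact O.mul_mem (O.intCast_mem q.num) hmy

/-- The conductor of an order is a nonzero ideal of `O_K`. -/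
lemma condOK_ne_bot (hO : IsOrder O) : condOK O ≠ ⊥ := by
  classical
  obtain ⟨s, hs⟩ := Module.Finite.fg_top (R := ℤ) (M := 𝓞 K)
  choose m hm0 hmem using fun b : 𝓞 K => exists_int_mul_mem O hO (b : K)
  set M : ℤ := ∏ b ∈ s, m b with hM
  have hM0 : M ≠ 0 := Finset.prod_ne_zero_iff.mpr fun b _ => hm0 b
  have key : ∀ y : 𝓞 K, (M : K) * (y : K) ∈ O := by
    intro y
    have hy : y ∈ Submodule.span ℤ (s : Set (𝓞 K)) := by rw [hs]; trivial
    induction hy using Submodule.span_induction with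
    | mem b hb =>
        have : (M : K) * (b : K) = ((∏ c ∈ s.erase b, m c : ℤ) : K) * ((m b : K) * (b : K)) := by
          rw [hM, ← Finset.mul_prod_erase s m hb]
          push_cast; ring
        rw [this]
        exact O.mul_mem (O.intCast_mem _) (hmem b)
    | zero => simpa using O.zero_mem
    | add y z _ _ ihy ihz =>
        have : (M : K) * ((y + z : 𝓞 K) : K) = (M : K) * (y : K) + (M : K) * (z : K) := by
          push_cast; ring
        rw [this]; exact O.add_mem ihy ihz
    | smul z y _ ih =>
        have : (M : K) * ((z • y : 𝓞 K) : K) = (z : K) * ((M : K) * (y : K)) := by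
          rw [zsmul_eq_mul]; push_cast [coe_intCast_OK]; ring
        rw [this]; exact O.mul_mem (O.intCast_mem z) ih
  intro h
  have hmemM : (M : 𝓞 K) ∈ condOK O := by
    intro b
    have : ((M : 𝓞 K) : K) * (b : K) = (M : K) * (b : K) := by rw [coe_intCast_OK]
    rw [this]; exact key b
  rw [h, Ideal.mem_bot] at hmemM
  exact hM0 (by exact_mod_cast hmemM)

/-- If `β ∈ O` is coprime (in `O`) to the conductor and `β x ∈ O` for an algebraic
integer `x`, then `x ∈ O`. -/
lemma mem_O_of_coprime_mul_mem (β : O) (hβ : Ideal.span {β} ⊔ condO O = ⊤)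
    {x : K} (hx : ∃ y : 𝓞 K, (y : K) = x) (h : (β : K) * x ∈ O) : x ∈ O := by
  obtain ⟨y, rfl⟩ := hx
  rw [Ideal.eq_top_iff_one] at hβ
  obtain ⟨v, hv, c, hc, hvc⟩ := Submodule.mem_sup.mp hβ
  obtain ⟨t, rfl⟩ := Ideal.mem_span_singleton'.mp hv
  have h1 : (t : K) * (β : K) + (c : K) = 1 := by
    have := congrArg (fun z : O => (z : K)) hvc
    push_cast at this
    simpa using this
  have hy : (y : K) = (t : K) * ((β : K) * (y : K)) + (c : K) * (y : K) := by
    linear_combination (-(y : K)) * h1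
  rw [hy]
  exact O.add_mem (O.mul_mem t.2 h) ((mem_condO_iff O).mp hc y)

/-- If `a ∈ O` generates an `O_K`-ideal coprime to the conductor, then `a` is coprime to
the conductor as an element of `O`. -/
lemma coprime_in_O (hO : IsOrder O) (a : 𝓞 K) (ha : (a : K) ∈ O)
    (hcop : Ideal.span {a} ⊔ condOK O = ⊤) :
    Ideal.span {(⟨(a : K), ha⟩ : O)} ⊔ condO O = ⊤ := by
  have hf : condOK O ≠ ⊥ := condOK_ne_bot O hO
  haveI : Fintype (𝓞 K ⧸ condOK O) := @Fintype.ofFinite _ (Ideal.finiteQuotientOfFreeOfNeBot _ hf)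
  rw [Ideal.eq_top_iff_one] at hcop
  obtain ⟨v, hv, c, hc, hvc⟩ := Submodule.mem_sup.mp hcop
  obtain ⟨s, rfl⟩ := Ideal.mem_span_singleton'.mp hv
  have hmul : Ideal.Quotient.mk (condOK O) a * Ideal.Quotient.mk (condOK O) s = 1 := by
    rw [← map_mul, ← map_one (Ideal.Quotient.mk (condOK O))]
    rw [Ideal.Quotient.eq]
    have : a * s - 1 = -c := by linear_combination hvc
    rw [this]
    exact neg_mem hc
  obtain ⟨u, hu⟩ := IsUnit.of_mul_eq_one _ hmul
  set k := orderOf u with hk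
  have hkpos : 0 < k := orderOf_pos u
  have hpow : Ideal.Quotient.mk (condOK O) (a ^ k) = Ideal.Quotient.mk (condOK O) 1 := by
    rw [map_pow, ← hu, map_one, ← Units.val_pow_eq_pow_val, pow_orderOf_eq_one, Units.val_one]
  have hmem : a ^ k - 1 ∈ condOK O := Ideal.Quotient.eq.mp hpow
  have hγO : ((a : K) ^ k - 1) ∈ O := by
    have := (mem_condOK_iff O).mp hmem 1
    push_cast at this
    simpa using this
  set γ : O := ⟨(a : K) ^ k - 1, hγO⟩ with hγ
  have hγf : γ ∈ condO O := by
    intro b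
    have := (mem_condOK_iff O).mp hmem b
    have hcoe : (γ : K) * (b : K) = ((a ^ k - 1 : 𝓞 K) : K) * (b : K) := by
      rw [hγ]; push_cast; ring
    rw [hcoe]
    exact this
  rw [Ideal.eq_top_iff_one]
  refine Submodule.mem_sup.mpr ⟨(⟨(a : K), ha⟩ : O) ^ k,
    Ideal.mem_span_singleton'.mpr ⟨(⟨(a : K), ha⟩ : O) ^ (k - 1), ?_⟩, -γ, neg_mem hγf, ?_⟩
  · rw [← pow_succ]
    congr 1
    omega
  · apply Subtype.ext
    push_cast [hγ]
    ring

end Aux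

/-- Let `H_O` (here `L`) be the ring class field of the order `O`: the
abelian extension of `K`, unramified outside the conductor `f`, in which a prime ideal of
`O_K` coprime to `f` splits completely precisely when its class lies in `P_{K,O}^f`
(this is the statement that the kernel of the Artin map is `P_{K,O}^f`).  Then a prime
ideal `P` of `O_K` coprime to `f` splits completely in `H_O` if and only if `P = α·O_K`
for some `α ∈ O`. -/
theorem splits_completely_iff_principal_from_order {K : Type*} [Field K] [NumberField K]
    (O : Subalgebra ℤ K) (hO : IsOrder O)
    (L : Type*) [Field L] [NumberField L] [Algebra K L] [FiniteDimensional K L]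
    [IsGalois K L]
    (habelian : ∀ σ τ : L ≃ₐ[K] L, σ * τ = τ * σ)
    (hunram : ∀ (P : Ideal (𝓞 K)), P.IsPrime → P ≠ ⊥ → ¬ condOK O ≤ P →
      ∀ Q : Ideal (𝓞 L), Q.IsPrime → Q ≠ ⊥ →
        Ideal.comap (algebraMap (𝓞 K) (𝓞 L)) Q = P →
        Ideal.ramificationIdx' P Q = 1)
    (hartin : ∀ P : Ideal (𝓞 K), P.IsPrime → P ≠ ⊥ → ¬ condOK O ≤ P →
      (SplitsCompletely (algebraMap (𝓞 K) (𝓞 L)) P ↔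
        ∃ u : (FractionalIdeal (𝓞 K)⁰ K)ˣ,
          (u : FractionalIdeal (𝓞 K)⁰ K) = P ∧ u ∈ PKOf O))
    (P : Ideal (𝓞 K)) (hP : P.IsPrime) (hP0 : P ≠ ⊥) (hPf : ¬ condOK O ≤ P) :
    SplitsCompletely (algebraMap (𝓞 K) (𝓞 L)) P ↔
      ∃ a : 𝓞 K, (a : K) ∈ O ∧ P = Ideal.span {a} := by
  rw [hartin P hP hP0 hPf]
  constructor
  · rintro ⟨u, hu, humem⟩
    have key : ∀ w : (FractionalIdeal (𝓞 K)⁰ K)ˣ, w ∈ PKOf O →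
        ∃ α β : O, Ideal.span {α} ⊔ condO O = ⊤ ∧ Ideal.span {β} ⊔ condO O = ⊤ ∧
          (α : K) ≠ 0 ∧ (β : K) ≠ 0 ∧
          (w : FractionalIdeal (𝓞 K)⁰ K) =
            FractionalIdeal.spanSingleton (𝓞 K)⁰ ((α : K) / (β : K)) := by
      intro w hw
      induction hw using Subgroup.closure_induction with
      | mem x hx =>
          obtain ⟨α, hα, hx⟩ := hx
          have hne : (α : K) ≠ 0 := by
            intro h0
            have h1 : (x : FractionalIdeal (𝓞 K)⁰ K) *
                ((x⁻¹ : (FractionalIdeal (𝓞 K)⁰ K)ˣ) : FractionalIdeal (𝓞 K)⁰ K) = 1 := by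
              rw [← Units.val_mul, mul_inv_cancel, Units.val_one]
            rw [hx, h0, FractionalIdeal.spanSingleton_zero, zero_mul] at h1
            exact zero_ne_one h1
          refine ⟨α, 1, hα, ?_, hne, by simp, ?_⟩
          · rw [Ideal.span_singleton_one, top_sup_eq]
          · rw [hx]
            norm_num
      | one =>
          refine ⟨1, 1, ?_, ?_, by simp, by simp, ?_⟩
          · rw [Ideal.span_singleton_one, top_sup_eq]
          · rw [Ideal.span_singleton_one, top_sup_eq]
          · norm_num [FractionalIdeal.spanSingleton_one]
      | mul x y hxc hyc ihx ihy =>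
          obtain ⟨α₁, β₁, hα₁, hβ₁, hα₁0, hβ₁0, hrep₁⟩ := ihx
          obtain ⟨α₂, β₂, hα₂, hβ₂, hα₂0, hβ₂0, hrep₂⟩ := ihy
          refine ⟨α₁ * α₂, β₁ * β₂, span_singleton_mul_sup_eq_top hα₁ hα₂,
            span_singleton_mul_sup_eq_top hβ₁ hβ₂, ?_, ?_, ?_⟩
          · push_cast; exact mul_ne_zero hα₁0 hα₂0
          · push_cast; exact mul_ne_zero hβ₁0 hβ₂0
          · rw [Units.val_mul, hrep₁, hrep₂, FractionalIdeal.spanSingleton_mul_spanSingleton]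
            push_cast
            rw [div_mul_div_comm]
      | inv x hxc ihx =>
          obtain ⟨α, β, hα, hβ, hα0, hβ0, hrep⟩ := ihx
          refine ⟨β, α, hβ, hα, hβ0, hα0, ?_⟩
          have hmul : (x : FractionalIdeal (𝓞 K)⁰ K) *
              FractionalIdeal.spanSingleton (𝓞 K)⁰ ((β : K) / (α : K)) = 1 := by
            rw [hrep, FractionalIdeal.spanSingleton_mul_spanSingleton]
            have h2 : (α : K) / (β : K) * ((β : K) / (α : K)) = 1 := by
              field_simp
            rw [h2, FractionalIdeal.spanSingleton_one]
          calc ((x⁻¹ : (FractionalIdeal (𝓞 K)⁰ K)ˣ) : FractionalIdeal (𝓞 K)⁰ K)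
              = ((x⁻¹ : (FractionalIdeal (𝓞 K)⁰ K)ˣ) : FractionalIdeal (𝓞 K)⁰ K) *
                ((x : FractionalIdeal (𝓞 K)⁰ K) *
                  FractionalIdeal.spanSingleton (𝓞 K)⁰ ((β : K) / (α : K))) := by
                rw [hmul, mul_one]
            _ = (((x⁻¹ : (FractionalIdeal (𝓞 K)⁰ K)ˣ) : FractionalIdeal (𝓞 K)⁰ K) *
                  (x : FractionalIdeal (𝓞 K)⁰ K)) *
                FractionalIdeal.spanSingleton (𝓞 K)⁰ ((β : K) / (α : K)) := by
                rw [mul_assoc]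
            _ = FractionalIdeal.spanSingleton (𝓞 K)⁰ ((β : K) / (α : K)) := by
                rw [← Units.val_mul, inv_mul_cancel, Units.val_one, one_mul]
    obtain ⟨α, β, hαc, hβc, hα0, hβ0, hrep⟩ := key u humem
    set x : K := (α : K) / (β : K) with hxdef
    have hxP : x ∈ (P : FractionalIdeal (𝓞 K)⁰ K) := by
      rw [← hu, hrep]
      exact FractionalIdeal.mem_spanSingleton_self _ _
    obtain ⟨y, hyP, hyx⟩ := (FractionalIdeal.mem_coeIdeal _).mp hxP
    have hyx' : (y : K) = x := hyx
    have hβx : (β : K) * x ∈ O := by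
      have h3 : (β : K) * x = (α : K) := by
        rw [hxdef]; field_simp
      rw [h3]; exact α.2
    have hxO : x ∈ O := mem_O_of_coprime_mul_mem O β hβc ⟨y, hyx'⟩ hβx
    refine ⟨y, by rwa [hyx'], ?_⟩
    apply FractionalIdeal.coeIdeal_injective (K := K)
    show ((P : Ideal (𝓞 K)) : FractionalIdeal (𝓞 K)⁰ K) =
      ((Ideal.span {y} : Ideal (𝓞 K)) : FractionalIdeal (𝓞 K)⁰ K)
    rw [FractionalIdeal.coeIdeal_span_singleton, hyx, ← hrep, hu]
  · rintro ⟨a, ha, rfl⟩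
    have ha0 : (a : K) ≠ 0 := by
      intro h
      have h0 : a = 0 := by exact_mod_cast h
      exact hP0 (Ideal.span_singleton_eq_bot.mpr h0)
    have hcopK : Ideal.span {a} ⊔ condOK O = ⊤ := by
      by_contra hne
      have hmax : (Ideal.span {a}).IsMaximal := hP.isMaximal hP0
      have heq := hmax.eq_of_le hne le_sup_left
      exact hPf (heq ▸ le_sup_right)
    have hcopO := coprime_in_O O hO a ha hcopK
    refine ⟨⟨FractionalIdeal.spanSingleton (𝓞 K)⁰ (a : K),
      FractionalIdeal.spanSingleton (𝓞 K)⁰ ((a : K)⁻¹), ?_, ?_⟩, ?_, ?_⟩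
    · rw [FractionalIdeal.spanSingleton_mul_spanSingleton, mul_inv_cancel₀ ha0,
        FractionalIdeal.spanSingleton_one]
    · rw [FractionalIdeal.spanSingleton_mul_spanSingleton, inv_mul_cancel₀ ha0,
        FractionalIdeal.spanSingleton_one]
    · exact (FractionalIdeal.coeIdeal_span_singleton a).symm
    · exact Subgroup.subset_closure ⟨⟨(a : K), ha⟩, hcopO, rfl⟩
end

section
/- Let d ≥ 5 and n ≥ 1 be two distinct rational primes both congruent to 1 mod 4. If the Legendre symbol (d/n) = −1, or the quartic residue symbol (d/n)_4 = −1, then there exist α, β ∈ O_F with F = Q(√−d) such that −1 = α² + nβ². -/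
open NumberField

set_option maxHeartbeats 1000000
set_option synthInstance.maxHeartbeats 400000


private lemma pell_descent (d n : ℕ) (hd : d.Prime) (hn : n.Prime)
    (hd1 : d % 4 = 1) (hn1 : n % 4 = 1) :
    ∀ N : ℕ, ∀ x y : ℤ, x.natAbs = N → x ^ 2 - (d : ℤ) * n * y ^ 2 = 1 → y ≠ 0 →
      (∃ a b : ℤ, a ^ 2 - (d : ℤ) * n * b ^ 2 = -1) ∨
      (∃ a b : ℤ, (d : ℤ) * a ^ 2 - (n : ℤ) * b ^ 2 = 1) ∨
      (∃ a b : ℤ, (n : ℤ) * b ^ 2 - (d : ℤ) * a ^ 2 = 1) := by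
  intro N
  induction N using Nat.strong_induction_on with
  | _ N IH =>
    intro x y hxN heq hy
    have hd5 : 5 ≤ d := by have := hd.two_le; omega
    have hn5 : 5 ≤ n := by have := hn.two_le; omega
    have hd0 : (0:ℤ) < d := by exact_mod_cast hd.pos
    have hn0 : (0:ℤ) < n := by exact_mod_cast hn.pos
    have hD25 : (25:ℤ) ≤ (d:ℤ) * n := by
      have := Nat.mul_le_mul hd5 hn5; exact_mod_cast this
    obtain ⟨X, hX⟩ : ∃ X : ℤ, X = |x| := ⟨|x|, rfl⟩
    have hX0 : 0 ≤ X := hX ▸ abs_nonneg x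
    have heq' : X ^ 2 - (d:ℤ) * n * y ^ 2 = 1 := by rw [hX, sq_abs]; exact heq
    have hXN : X.natAbs = N := by rw [hX, Int.natAbs_abs]; exact hxN
    have hy1 : 1 ≤ y ^ 2 := by
      have h1 : 1 ≤ |y| := Int.one_le_abs hy
      nlinarith [sq_abs y]
    have hX3 : 3 ≤ X := by nlinarith
    have hd8 : (d : ZMod 8) = 1 ∨ (d : ZMod 8) = 5 := by
      have h8 : d % 8 = 1 ∨ d % 8 = 5 := by omega
      rcases h8 with h | h
      · left; rw [← ZMod.natCast_mod, h]; rfl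
      · right; rw [← ZMod.natCast_mod, h]; rfl
    have hn8 : (n : ZMod 8) = 1 ∨ (n : ZMod 8) = 5 := by
      have h8 : n % 8 = 1 ∨ n % 8 = 5 := by omega
      rcases h8 with h | h
      · left; rw [← ZMod.natCast_mod, h]; rfl
      · right; rw [← ZMod.natCast_mod, h]; rfl
    have h8 : ((X : ZMod 8)) ^ 2 = 1 + (d : ZMod 8) * (n : ZMod 8) * (y : ZMod 8) ^ 2 := by
      have := congrArg (fun z : ℤ => (z : ZMod 8)) heq'
      push_cast at this
      linear_combination this
    have key1 : ∀ X' Y' D' N' : ZMod 8, (D' = 1 ∨ D' = 5) → (N' = 1 ∨ N' = 5) →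
        X' ^ 2 = 1 + D' * N' * Y' ^ 2 →
        (X' = 1 ∨ X' = 3 ∨ X' = 5 ∨ X' = 7) := by decide
    have key2 : ∀ X' Y' D' N' : ZMod 8, (D' = 1 ∨ D' = 5) → (N' = 1 ∨ N' = 5) →
        X' ^ 2 = 1 + D' * N' * Y' ^ 2 →
        (Y' = 0 ∨ Y' = 2 ∨ Y' = 4 ∨ Y' = 6) := by decide
    have hXodd8 := key1 _ _ _ _ hd8 hn8 h8
    have hYeven8 := key2 _ _ _ _ hd8 hn8 h8
    have hXodd : ¬ (2:ℤ) ∣ X := by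
      rintro ⟨c, hc⟩
      have hc8 : (X : ZMod 8) = 2 * (c : ZMod 8) := by rw [hc]; push_cast; ring
      rw [hc8] at hXodd8
      revert hXodd8
      generalize (c : ZMod 8) = c'
      revert c'; decide
    have hYeven : (2:ℤ) ∣ y := by
      by_contra hdvd
      obtain ⟨c, hc⟩ : ∃ c, y = 2 * c + 1 := ⟨y / 2, by omega⟩
      have hc8 : (y : ZMod 8) = 2 * (c : ZMod 8) + 1 := by rw [hc]; push_cast; ring
      rw [hc8] at hYeven8
      revert hYeven8
      generalize (c : ZMod 8) = c'
      revert c'; decide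
    obtain ⟨t, ht⟩ : ∃ t, X = 2 * t + 1 := ⟨X / 2, by omega⟩
    obtain ⟨w, hw⟩ := hYeven
    have ht1 : 1 ≤ t := by omega
    have hw0 : w ≠ 0 := by rintro rfl; simp at hw; exact hy hw
    have hfac : t * (t + 1) = (d : ℤ) * n * w ^ 2 := by
      have h4 : 4 * (t * (t + 1)) = 4 * ((d:ℤ) * n * w ^ 2) := by
        rw [ht, hw] at heq'; linear_combination heq'
      linarith
    have hcop : IsCoprime t (t + 1) := ⟨-1, 1, by ring⟩
    have hdp : Prime (d : ℤ) := Nat.prime_iff_prime_int.mp hd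
    have hnp : Prime (n : ℤ) := Nat.prime_iff_prime_int.mp hn
    have hddvd : (d : ℤ) ∣ t * (t + 1) := ⟨(n : ℤ) * w ^ 2, by rw [hfac]; ring⟩
    have hXsq : X ^ 2 = x ^ 2 := by rw [hX]; exact sq_abs x
    have hposfac : ∀ c u : ℤ, 0 < c → 0 < c * u → 0 < u := by
      intro c u hc hcu
      rcases mul_pos_iff.mp hcu with ⟨_, h⟩ | ⟨h, _⟩
      · exact h
      · linarith
    rcases hdp.dvd_or_dvd hddvd with hdt | hdt1
    · obtain ⟨t₁, ht₁⟩ := hdt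
      have ht₁pos : 0 < t₁ := hposfac _ _ hd0 (by rw [← ht₁]; linarith)
      have hfac2 : t₁ * (t + 1) = (n : ℤ) * w ^ 2 := by
        have h' : (d:ℤ) * (t₁ * (t + 1)) = (d:ℤ) * ((n:ℤ) * w ^ 2) := by
          linear_combination hfac - (t + 1) * ht₁
        exact mul_left_cancel₀ (ne_of_gt hd0) h'
      have hndvd : (n : ℤ) ∣ t₁ * (t + 1) := ⟨w ^ 2, by rw [hfac2]⟩
      rcases hnp.dvd_or_dvd hndvd with hnt | hnt1
      · -- t = d * n * t₂ , t+1 = b^2 : smaller solution, recurse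
        obtain ⟨t₂, ht₂⟩ := hnt
        have ht₂pos : 0 < t₂ := hposfac _ _ hn0 (by rw [← ht₂]; linarith)
        have hfac3 : t₂ * (t + 1) = w ^ 2 := by
          have h' : (n:ℤ) * (t₂ * (t + 1)) = (n:ℤ) * w ^ 2 := by
            linear_combination hfac2 - (t + 1) * ht₂
          exact mul_left_cancel₀ (ne_of_gt hn0) h'
        have hcop2 : IsCoprime t₂ (t + 1) :=
          hcop.of_isCoprime_of_dvd_left ⟨(d:ℤ) * n, by rw [ht₁, ht₂]; ring⟩
        obtain ⟨a, ha⟩ := Int.sq_of_isCoprime hcop2 hfac3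
        obtain ⟨b, hb⟩ := Int.sq_of_isCoprime hcop2.symm (by rw [mul_comm]; exact hfac3)
        have ha' : t₂ = a ^ 2 := by
          rcases ha with h | h
          · exact h
          · exfalso; linarith [sq_nonneg a]
        have hb' : t + 1 = b ^ 2 := by
          rcases hb with h | h
          · exact h
          · exfalso; linarith [sq_nonneg b]
        have ha0 : a ≠ 0 := by
          rintro rfl; simp at ha'; omega
        have hneweq : b ^ 2 - (d : ℤ) * n * a ^ 2 = 1 := by
          rw [← hb', ← ha']
          have : t = (d:ℤ) * n * t₂ := by rw [ht₁, ht₂]; ring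
          linarith [this]
        have hlt : b.natAbs < N := by
          rw [← hXN, Int.natAbs_lt_iff_sq_lt]
          have hX2 : X ^ 2 = 4 * t ^ 2 + 4 * t + 1 := by rw [ht]; ring
          linarith [sq_nonneg t]
        exact IH b.natAbs hlt b a rfl hneweq ha0
      · -- t = d a², t+1 = n b² : case (iii)
        obtain ⟨v₁, hv₁⟩ := hnt1
        have hv₁pos : 0 < v₁ := hposfac _ _ hn0 (by rw [← hv₁]; linarith)
        have hfac3 : t₁ * v₁ = w ^ 2 := by
          have h' : (n:ℤ) * (t₁ * v₁) = (n:ℤ) * w ^ 2 := by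
            linear_combination hfac2 - t₁ * hv₁
          exact mul_left_cancel₀ (ne_of_gt hn0) h'
        have hcop2 : IsCoprime t₁ v₁ :=
          (hcop.of_isCoprime_of_dvd_left ⟨(d:ℤ), by rw [ht₁]; ring⟩).of_isCoprime_of_dvd_right
            ⟨(n:ℤ), by rw [hv₁]; ring⟩
        obtain ⟨a, ha⟩ := Int.sq_of_isCoprime hcop2 hfac3
        obtain ⟨b, hb⟩ := Int.sq_of_isCoprime hcop2.symm (by rw [mul_comm]; exact hfac3)
        have ha' : t₁ = a ^ 2 := by
          rcases ha with h | h
          · exact h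
          · exfalso; linarith [sq_nonneg a]
        have hb' : v₁ = b ^ 2 := by
          rcases hb with h | h
          · exact h
          · exfalso; linarith [sq_nonneg b]
        refine Or.inr (Or.inr ⟨a, b, ?_⟩)
        have h1 : t = (d:ℤ) * a ^ 2 := by rw [ht₁, ha']
        have h2 : t + 1 = (n:ℤ) * b ^ 2 := by rw [hv₁, hb']
        linarith
    · obtain ⟨v₁, hv₁⟩ := hdt1
      have hv₁pos : 0 < v₁ := hposfac _ _ hd0 (by rw [← hv₁]; linarith)
      have hfac2 : t * v₁ = (n : ℤ) * w ^ 2 := by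
        have h' : (d:ℤ) * (t * v₁) = (d:ℤ) * ((n:ℤ) * w ^ 2) := by
          linear_combination hfac - t * hv₁
        exact mul_left_cancel₀ (ne_of_gt hd0) h'
      have hndvd : (n : ℤ) ∣ t * v₁ := ⟨w ^ 2, by rw [hfac2]⟩
      rcases hnp.dvd_or_dvd hndvd with hnt | hnt1
      · -- t = n b², t+1 = d a² : case (ii)
        obtain ⟨t₁, ht₁⟩ := hnt
        have ht₁pos : 0 < t₁ := hposfac _ _ hn0 (by rw [← ht₁]; linarith)
        have hfac3 : t₁ * v₁ = w ^ 2 := by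
          have h' : (n:ℤ) * (t₁ * v₁) = (n:ℤ) * w ^ 2 := by
            linear_combination hfac2 - v₁ * ht₁
          exact mul_left_cancel₀ (ne_of_gt hn0) h'
        have hcop2 : IsCoprime t₁ v₁ :=
          (hcop.of_isCoprime_of_dvd_left ⟨(n:ℤ), by rw [ht₁]; ring⟩).of_isCoprime_of_dvd_right
            ⟨(d:ℤ), by rw [hv₁]; ring⟩
        obtain ⟨b, hb⟩ := Int.sq_of_isCoprime hcop2 hfac3
        obtain ⟨a, ha⟩ := Int.sq_of_isCoprime hcop2.symm (by rw [mul_comm]; exact hfac3)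
        have hb' : t₁ = b ^ 2 := by
          rcases hb with h | h
          · exact h
          · exfalso; linarith [sq_nonneg b]
        have ha' : v₁ = a ^ 2 := by
          rcases ha with h | h
          · exact h
          · exfalso; linarith [sq_nonneg a]
        refine Or.inr (Or.inl ⟨a, b, ?_⟩)
        have h1 : t = (n:ℤ) * b ^ 2 := by rw [ht₁, hb']
        have h2 : t + 1 = (d:ℤ) * a ^ 2 := by rw [hv₁, ha']
        linarith
      · -- t = a², t+1 = dn b² : case (i)
        obtain ⟨v₂, hv₂⟩ := hnt1
        have hv₂pos : 0 < v₂ := hposfac _ _ hn0 (by rw [← hv₂]; linarith)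
        have hfac3 : t * v₂ = w ^ 2 := by
          have h' : (n:ℤ) * (t * v₂) = (n:ℤ) * w ^ 2 := by
            linear_combination hfac2 - t * hv₂
          exact mul_left_cancel₀ (ne_of_gt hn0) h'
        have hcop2 : IsCoprime t v₂ :=
          hcop.of_isCoprime_of_dvd_right ⟨(d:ℤ) * n, by rw [hv₁, hv₂]; ring⟩
        obtain ⟨a, ha⟩ := Int.sq_of_isCoprime hcop2 hfac3
        obtain ⟨b, hb⟩ := Int.sq_of_isCoprime hcop2.symm (by rw [mul_comm]; exact hfac3)
        have ha' : t = a ^ 2 := by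
          rcases ha with h | h
          · exact h
          · exfalso; linarith [sq_nonneg a]
        have hb' : v₂ = b ^ 2 := by
          rcases hb with h | h
          · exact h
          · exfalso; linarith [sq_nonneg b]
        refine Or.inl ⟨a, b, ?_⟩
        have h1 : t = a ^ 2 := ha'
        have h2 : t + 1 = (d:ℤ) * n * b ^ 2 := by rw [hv₁, hv₂, hb']; ring
        linarith

private lemma no_case_three (d n : ℕ) (hd : d.Prime) (hn : n.Prime) (hdn : d ≠ n)
    (hd1 : d % 4 = 1) (hn1 : n % 4 = 1)
    (hsym : (@legendreSym n ⟨hn⟩ (d : ℤ) = -1) ∨ ((d : ZMod n) ^ ((n - 1) / 4) = -1))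
    (a b : ℤ) (h : (n : ℤ) * b ^ 2 - (d : ℤ) * a ^ 2 = 1) : False := by
  haveI instn : Fact n.Prime := ⟨hn⟩
  haveI instd : Fact d.Prime := ⟨hd⟩
  have hd5 : 5 ≤ d := by have := hd.two_le; omega
  have hn5 : 5 ≤ n := by have := hn.two_le; omega
  obtain ⟨A, hA, hA0⟩ : ∃ A : ℤ, A = |a| ∧ 0 ≤ A := ⟨|a|, rfl, abs_nonneg a⟩
  obtain ⟨B, hB, hB0⟩ : ∃ B : ℤ, B = |b| ∧ 0 ≤ B := ⟨|b|, rfl, abs_nonneg b⟩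
  have h' : (n : ℤ) * B ^ 2 - (d : ℤ) * A ^ 2 = 1 := by rw [hA, hB, sq_abs, sq_abs]; exact h
  clear h hA hB
  have hn0 : (5:ℤ) ≤ (n:ℤ) := by exact_mod_cast hn5
  have hApos : 0 < A := by
    rcases LE.le.eq_or_lt' hA0 with h0 | h0
    · exfalso
      rw [h0] at h'
      norm_num at h'
      rcases LE.le.eq_or_lt' (sq_nonneg B) with hB2 | hB2
      · rw [hB2, mul_zero] at h'; norm_num at h'
      · have h1 : 1 ≤ B ^ 2 := hB2
        nlinarith
    · exact h0
  have hcopBA : IsCoprime B A := ⟨(n:ℤ) * B, -((d:ℤ) * A), by linear_combination h'⟩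
  rcases hsym with hleg | hq
  · -- Legendre symbol branch
    have hndvd : ¬ (d ∣ n) := fun hdvd => hdn ((Nat.prime_dvd_prime_iff_eq hd hn).mp hdvd)
    have hnd : ((n : ℤ) : ZMod d) ≠ 0 := by
      rw [Int.cast_natCast, Ne, ZMod.natCast_eq_zero_iff]
      exact hndvd
    have hmodd : (n : ZMod d) * (B : ZMod d) ^ 2 = 1 := by
      have hc := congrArg (fun z : ℤ => (z : ZMod d)) h'
      push_cast at hc
      rw [ZMod.natCast_self] at hc
      linear_combination hc
    have hBne : (B : ZMod d) ≠ 0 := by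
      intro h0; rw [h0] at hmodd; simp at hmodd
    have hsq : IsSquare ((n : ℤ) : ZMod d) := by
      refine ⟨(B : ZMod d)⁻¹, ?_⟩
      push_cast
      field_simp
      linear_combination hmodd
    have h1 : legendreSym d n = 1 := (legendreSym.eq_one_iff d hnd).mpr hsq
    have h2 : legendreSym n d = legendreSym d n :=
      legendreSym.quadratic_reciprocity_one_mod_four hd1 (by omega)
    rw [h2, h1] at hleg
    norm_num at hleg
  · -- quartic branch
    set k := (n - 1) / 4 with hk
    have hn2 : n / 2 = 2 * k := by omega
    have hkeq : 4 * k + 1 = n := by omega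
    have hmodn : (d : ZMod n) * (A : ZMod n) ^ 2 = -1 := by
      have hc := congrArg (fun z : ℤ => (z : ZMod n)) h'
      push_cast at hc
      rw [ZMod.natCast_self] at hc
      linear_combination -hc
    have hAne : (A : ZMod n) ≠ 0 := by
      intro h0
      rw [h0] at hmodn
      rw [zero_pow (by norm_num : (2:ℕ) ≠ 0), mul_zero] at hmodn
      have h2 : ((2:ℕ) : ZMod n) = 0 := by push_cast; linear_combination 2 * hmodn
      rw [ZMod.natCast_eq_zero_iff] at h2
      have := Nat.le_of_dvd (by norm_num) h2
      omega
    have hne : (1 : ZMod n) ≠ -1 := by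
      intro hcon
      have h2 : ((2:ℕ) : ZMod n) = 0 := by push_cast; linear_combination hcon
      rw [ZMod.natCast_eq_zero_iff] at h2
      have := Nat.le_of_dvd (by norm_num) h2
      omega
    have hpow : ((A : ZMod n)) ^ (n / 2) = (-1 : ZMod n) ^ (k + 1) := by
      have h1 : ((d : ZMod n) * (A : ZMod n) ^ 2) ^ k = (-1 : ZMod n) ^ k := by rw [hmodn]
      rw [mul_pow, ← pow_mul, hq] at h1
      rw [hn2, mul_comm 2 k, pow_succ]
      linear_combination -h1
    have hlegA : ((legendreSym n A : ℤ) : ZMod n) = (-1 : ZMod n) ^ (k + 1) := by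
      rw [legendreSym.eq_pow]
      exact hpow
    have hA1 : legendreSym n A = 1 ∨ legendreSym n A = -1 :=
      legendreSym.eq_one_or_neg_one (p := n) hAne
    have hJA : jacobiSym A n = legendreSym n A := (jacobiSym.legendreSym.to_jacobiSym n A).symm
    have hnodd : Odd n := by rw [Nat.odd_iff]; omega
    -- J(m | n) = 1 for any odd positive divisor m of A
    have hJm : ∀ m : ℕ, Odd m → ((m:ℤ) ∣ A) → jacobiSym (m : ℤ) n = 1 := by
      intro m hm hmA
      have hrec : jacobiSym (n : ℤ) m = jacobiSym (m : ℤ) n :=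
        jacobiSym.quadratic_reciprocity_one_mod_four hn1 hm
      rw [← hrec]
      have hmod : ((n:ℤ) * B ^ 2) % m = 1 % m := by
        have hdvd : (m:ℤ) ∣ ((n:ℤ) * B ^ 2 - 1) := by
          obtain ⟨c, hc⟩ := hmA
          refine ⟨(d:ℤ) * c * A, ?_⟩
          have he : (n:ℤ) * B ^ 2 - 1 = (d:ℤ) * A ^ 2 := by linarith
          rw [he, hc]; ring
        exact Int.ModEq.symm (Int.modEq_iff_dvd.mpr (by simpa using hdvd))
      have hcopBm : IsCoprime B (m:ℤ) := hcopBA.of_isCoprime_of_dvd_right hmA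
      have hgcd : Int.gcd B m = 1 := Int.isCoprime_iff_gcd_eq_one.mp hcopBm
      have h1 : jacobiSym ((n:ℤ) * B ^ 2) m = jacobiSym (n:ℤ) m * jacobiSym B m ^ 2 := by
        rw [jacobiSym.mul_left, jacobiSym.pow_left]
      have h2 : jacobiSym B m ^ 2 = 1 := jacobiSym.sq_one hgcd
      have h3 : jacobiSym ((n:ℤ) * B ^ 2) m = 1 := by
        rw [jacobiSym.mod_left' hmod, jacobiSym.one_left]
      calc jacobiSym (n:ℤ) m = jacobiSym (n:ℤ) m * jacobiSym B m ^ 2 := by rw [h2, mul_one]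
        _ = 1 := by rw [← h1, h3]
    have h8 : n % 8 = 1 ∨ n % 8 = 5 := by omega
    rcases h8 with h8 | h8
    · -- n ≡ 1 mod 8 : k even, legendre A must be -1, but Jacobi computation gives 1
      have hkeven : k % 2 = 0 := by omega
      have hval : (-1 : ZMod n) ^ (k + 1) = -1 := Odd.neg_one_pow ⟨k / 2, by omega⟩
      have hL : legendreSym n A = -1 := by
        rcases hA1 with hL | hL
        · exfalso; rw [hL, hval] at hlegA; exact hne (by exact_mod_cast hlegA)
        · exact hL
      obtain ⟨e, m, hm2, hfac⟩ :=
        Nat.exists_eq_pow_mul_and_not_dvd (show A.natAbs ≠ 0 by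
          simpa using (Int.natAbs_pos.mpr (ne_of_gt hApos))) 2 (by norm_num)
      have hAeq : A = (2:ℤ) ^ e * (m:ℤ) := by
        have := Int.natAbs_of_nonneg hA0
        rw [← this]
        exact_mod_cast congrArg (fun z : ℕ => (z : ℤ)) hfac
      have hmodd : Odd m := Nat.odd_iff.mpr (by omega)
      have hmdvd : ((m:ℤ)) ∣ A := ⟨(2:ℤ) ^ e, by rw [hAeq]; ring⟩
      have hJ2 : jacobiSym 2 n = 1 := by
        rw [jacobiSym.at_two hnodd]
        have : (n : ZMod 8) = 1 := by rw [← ZMod.natCast_mod, h8]; rfl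
        rw [show ZMod.χ₈ (n : ZMod 8) = ZMod.χ₈ 1 from by rw [this]]
        decide
      have hJcalc : jacobiSym A n = 1 := by
        rw [hAeq, jacobiSym.mul_left, jacobiSym.pow_left, hJ2, one_pow, one_mul]
        exact hJm m hmodd hmdvd
      rw [hJA, hL] at hJcalc
      norm_num at hJcalc
    · -- n ≡ 5 mod 8 : k odd, legendre A must be 1, but Jacobi computation gives -1
      have hkodd : k % 2 = 1 := by omega
      have hval : (-1 : ZMod n) ^ (k + 1) = 1 := Even.neg_one_pow ⟨(k+1)/2, by omega⟩
      have hL : legendreSym n A = 1 := by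
        rcases hA1 with hL | hL
        · exact hL
        · exfalso; rw [hL, hval] at hlegA
          exact hne (by exact_mod_cast hlegA.symm)
      -- mod 8 : A ≡ 2 or 6
      have hd8 : (d : ZMod 8) = 1 ∨ (d : ZMod 8) = 5 := by
        have h8' : d % 8 = 1 ∨ d % 8 = 5 := by omega
        rcases h8' with h | h
        · left; rw [← ZMod.natCast_mod, h]; rfl
        · right; rw [← ZMod.natCast_mod, h]; rfl
      have hn8 : (n : ZMod 8) = 5 := by rw [← ZMod.natCast_mod, h8]; rfl
      have h8eq : (5 : ZMod 8) * (B : ZMod 8) ^ 2 - (d : ZMod 8) * (A : ZMod 8) ^ 2 = 1 := by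
        have hc := congrArg (fun z : ℤ => (z : ZMod 8)) h'
        push_cast at hc
        rw [hn8] at hc
        linear_combination hc
      have key : ∀ A' B' D' : ZMod 8, (D' = 1 ∨ D' = 5) →
          5 * B' ^ 2 - D' * A' ^ 2 = 1 → (A' = 2 ∨ A' = 6) := by decide
      have hA8 : (A : ZMod 8) = 2 ∨ (A : ZMod 8) = 6 := key _ _ _ hd8 h8eq
      have h4 : (A : ZMod 4) = 2 := by
        have hmap : ∀ z : ZMod 8, (z = 2 ∨ z = 6) →
            (ZMod.castHom (by norm_num : (4:ℕ) ∣ 8) (ZMod 4)) z = 2 := by decide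
        have := hmap _ hA8
        rwa [map_intCast] at this
      have hdvd4 : ((4:ℕ) : ℤ) ∣ (A - 2) := by
        rw [← ZMod.intCast_zmod_eq_zero_iff_dvd]
        push_cast
        rw [h4]
        ring
      obtain ⟨t, ht⟩ := hdvd4
      have hAeq : A = 2 * (2 * t + 1) := by push_cast at ht; linarith
      have ht0 : 0 ≤ t := by nlinarith
      obtain ⟨m, hm⟩ : ∃ m : ℕ, (m : ℤ) = 2 * t + 1 := ⟨(2 * t + 1).toNat, Int.toNat_of_nonneg (by linarith)⟩
      have hmodd : Odd m := by
        rw [Nat.odd_iff]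
        omega
      have hmdvd : ((m:ℤ)) ∣ A := ⟨2, by rw [hAeq, hm]; ring⟩
      have hJ2 : jacobiSym 2 n = -1 := by
        rw [jacobiSym.at_two hnodd]
        rw [show ZMod.χ₈ (n : ZMod 8) = ZMod.χ₈ 5 from by rw [hn8]]
        decide
      have hJcalc : jacobiSym A n = -1 := by
        rw [hAeq, ← hm, jacobiSym.mul_left, hJ2, hJm m hmodd hmdvd]
        norm_num
      rw [hJA, hL] at hJcalc
      norm_num at hJcalc

/-- Let `d ≥ 5` and `n` be two distinct rational primes, both `≡ 1 mod 4`,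
and `F = ℚ(√-d)`.  If the Legendre symbol `(d/n) = -1`, or the quartic residue symbol
`(d/n)₄ = -1` (i.e. `d^((n-1)/4) ≡ -1 mod n`), then `-1 = α² + nβ²` for some
`α, β ∈ O_F`. -/
theorem neg_one_sum_of_squares_of_symbols {F : Type*} [Field F] [NumberField F]
    (d n : ℕ) (hd : d.Prime) (hn : n.Prime) (hd5 : 5 ≤ d) (hdn : d ≠ n)
    (hd1 : d % 4 = 1) (hn1 : n % 4 = 1)
    (s : F) (hs : s ^ 2 = -(d : F)) (hgen : Algebra.adjoin ℚ {s} = ⊤)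
    (hsym : (@legendreSym n ⟨hn⟩ (d : ℤ) = -1) ∨ ((d : ZMod n) ^ ((n - 1) / 4) = -1)) :
    ∃ α β : 𝓞 F, (-1 : 𝓞 F) = α ^ 2 + (n : 𝓞 F) * β ^ 2 := by
  have hs_int : IsIntegral ℤ s := by
    refine ⟨Polynomial.X ^ 2 + Polynomial.C ((d:ℕ):ℤ),
      Polynomial.monic_X_pow_add_C _ two_ne_zero, ?_⟩
    simp only [Polynomial.eval₂_add, Polynomial.eval₂_pow, Polynomial.eval₂_X,
      Polynomial.eval₂_C, hs]
    simp
  set S : 𝓞 F := ⟨s, hs_int⟩ with hS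
  have hSs : (algebraMap (𝓞 F) F) S = s := rfl
  have hd0' : (0:ℤ) < (d:ℤ) * n := by
    have := hd.pos; have := hn.pos; positivity
  have hnsq : ¬ IsSquare ((d:ℤ) * n) := by
    rintro ⟨r, hr⟩
    have hdp : Prime (d:ℤ) := Nat.prime_iff_prime_int.mp hd
    have hdr : (d:ℤ) ∣ r := by
      have hdvd : (d:ℤ) ∣ r * r := ⟨(n:ℤ), hr.symm⟩
      exact (hdp.dvd_or_dvd hdvd).elim id id
    obtain ⟨c, hc⟩ := hdr
    have hn' : (n:ℤ) = (d:ℤ) * c ^ 2 := by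
      have h2 : (d:ℤ) * ((n:ℤ)) = (d:ℤ) * ((d:ℤ) * c ^ 2) := by linear_combination hr + (r + (d:ℤ) * c) * hc
      exact mul_left_cancel₀ (by exact_mod_cast hd.pos.ne') h2
    have hdvdn : (d:ℤ) ∣ (n:ℤ) := ⟨c ^ 2, hn'⟩
    have hdvdn' : d ∣ n := by exact_mod_cast hdvdn
    exact hdn ((Nat.prime_dvd_prime_iff_eq hd hn).mp hdvdn')
  obtain ⟨x, y, hxy, hy⟩ := Pell.exists_of_not_isSquare hd0' hnsq
  have hdes := pell_descent d n hd hn hd1 hn1 x.natAbs x y rfl hxy hy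
  rcases hdes with ⟨a, b, hab⟩ | ⟨a, b, hab⟩ | ⟨a, b, hab⟩
  · refine ⟨(a : 𝓞 F), (b : 𝓞 F) * S, ?_⟩
    have hcast : (a:F) ^ 2 - (d:F) * (n:F) * (b:F) ^ 2 = -1 := by
      have := congrArg (fun z : ℤ => (z : F)) hab
      push_cast at this
      exact this
    rw [← NumberField.RingOfIntegers.eq_iff]
    simp only [map_neg, map_one, map_add, map_mul, map_pow, map_intCast, map_natCast, hSs]
    linear_combination (-1 : F) * hcast - (n:F) * (b:F) ^ 2 * hs
  · refine ⟨(a : 𝓞 F) * S, (b : 𝓞 F), ?_⟩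
    have hcast : (d:F) * (a:F) ^ 2 - (n:F) * (b:F) ^ 2 = 1 := by
      have := congrArg (fun z : ℤ => (z : F)) hab
      push_cast at this
      exact this
    rw [← NumberField.RingOfIntegers.eq_iff]
    simp only [map_neg, map_one, map_add, map_mul, map_pow, map_intCast, map_natCast, hSs]
    linear_combination hcast - (a:F) ^ 2 * hs
  · exact (no_case_three d n hd hn hdn hd1 hn1 hsym a b hab).elim
end

section
/- Let d > 3 and n be positive squarefree coprime integers with d ≡ 3 (mod 4) and n ≡ 1 or 2 (mod 4). Set F = Q(√−d) and E = F(√−n). Then {1, (1+√−d)/2, √−n, ((1+√−d)/2)·√−n} is an integral basis of O_E; equivalently, O_E = O_F + O_F·√−n. -/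
open NumberField

set_option maxHeartbeats 1000000
set_option synthInstance.maxHeartbeats 400000


set_option maxHeartbeats 1000000

lemma sq4 (x : ℤ) : (x % 2 = 0 ∧ x ^ 2 % 4 = 0) ∨ (x % 2 = 1 ∧ x ^ 2 % 4 = 1) := by
  rcases Int.even_or_odd x with ⟨k, rfl⟩ | ⟨k, rfl⟩
  · left
    refine ⟨by omega, ?_⟩
    have h : (k + k) ^ 2 = 4 * k ^ 2 := by ring
    omega
  · right
    refine ⟨by omega, ?_⟩
    have h : (2 * k + 1) ^ 2 = 4 * (k ^ 2 + k) + 1 := by ring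
    omega

lemma sq8 (x : ℤ) : (x % 2 = 1 ∧ x ^ 2 % 8 = 1) ∨ (x % 2 = 0 ∧ x ^ 2 % 8 = 0)
    ∨ (x % 2 = 0 ∧ x ^ 2 % 8 = 4) := by
  rcases Int.even_or_odd x with ⟨k, rfl⟩ | ⟨k, rfl⟩
  · rcases sq4 k with ⟨hk, hk4⟩ | ⟨hk, hk4⟩
    · right; left
      have h : (k + k) ^ 2 = 4 * k ^ 2 := by ring
      omega
    · right; right
      have h : (k + k) ^ 2 = 4 * k ^ 2 := by ring
      omega
  · left
    have h : (2 * k + 1) ^ 2 = 4 * (k * (k + 1)) + 1 := by ring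
    have h2 : k * (k + 1) % 2 = 0 := by
      rcases Int.even_mul_succ_self k with ⟨m, hm⟩; omega
    omega

lemma oddmul (x y : ℤ) (hx : x % 2 = 1) (hy : y % 2 = 1) : x * y % 2 = 1 := by
  obtain ⟨a, ha⟩ : ∃ a, x = 2 * a + 1 := ⟨x / 2, by omega⟩
  obtain ⟨b, hb⟩ : ∃ b, y = 2 * b + 1 := ⟨y / 2, by omega⟩
  have h : x * y = 2 * (2 * (a * b) + a + b) + 1 := by rw [ha, hb]; ring
  omega

lemma endgame (d W Y : ℤ) (hd : d % 4 = 3) (h : 16 ∣ W ^ 2 + 4 * (d * Y ^ 2)) :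
    ¬(W % 4 = 2 ∧ Y % 2 = 0) ∧ ¬(W % 4 = 0 ∧ Y % 2 = 1) := by
  constructor
  · rintro ⟨hW, hY⟩
    obtain ⟨w, hw⟩ : ∃ w, W = 4 * w + 2 := ⟨W / 4, by omega⟩
    have hW2 : W ^ 2 = 16 * (w ^ 2 + w) + 4 := by rw [hw]; ring
    rcases sq4 Y with ⟨_, hY4⟩ | ⟨hc, _⟩
    · obtain ⟨y, hy⟩ : ∃ y, Y ^ 2 = 4 * y := ⟨Y ^ 2 / 4, by omega⟩
      have e : d * Y ^ 2 = 4 * (d * y) := by rw [hy]; ring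
      omega
    · omega
  · rintro ⟨hW, hY⟩
    obtain ⟨w, hw⟩ : ∃ w, W = 4 * w := ⟨W / 4, by omega⟩
    have hW2 : W ^ 2 = 16 * w ^ 2 := by rw [hw]; ring
    rcases sq4 Y with ⟨hc, _⟩ | ⟨_, hY4⟩
    · omega
    · obtain ⟨y, hy⟩ : ∃ y, Y ^ 2 = 4 * y + 1 := ⟨Y ^ 2 / 4, by omega⟩
      have e : d * Y ^ 2 = 4 * (d * y) + d := by rw [hy]; ring
      omega

set_option maxHeartbeats 2000000 in
lemma stage1odd (d n P Q R S : ℤ) (hd8 : d % 8 = 3 ∨ d % 8 = 7)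
    (hn8 : n % 8 = 1 ∨ n % 8 = 5)
    (hPQ : P % 2 = Q % 2) (hRS : R % 2 = S % 2)
    (h4 : 8 ∣ P ^ 2 - d * Q ^ 2 + n * R ^ 2 - n * d * S ^ 2) :
    P % 2 = 0 ∧ Q % 2 = 0 ∧ R % 2 = 0 ∧ S % 2 = 0 := by
  rcases hn8 with hn8 | hn8 <;> rcases hd8 with hd8 | hd8 <;>
  rcases sq8 P with ⟨hP, hP8⟩ | ⟨hP, hP8⟩ | ⟨hP, hP8⟩ <;>
  rcases sq8 Q with ⟨hQ, hQ8⟩ | ⟨hQ, hQ8⟩ | ⟨hQ, hQ8⟩ <;>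
  rcases sq8 R with ⟨hR, hR8⟩ | ⟨hR, hR8⟩ | ⟨hR, hR8⟩ <;>
  rcases sq8 S with ⟨hS, hS8⟩ | ⟨hS, hS8⟩ | ⟨hS, hS8⟩ <;>
  · have m1 := Int.mul_emod d (Q ^ 2) 8
    rw [hd8, hQ8] at m1
    have m2 := Int.mul_emod n (R ^ 2) 8
    rw [hn8, hR8] at m2
    have m4 := Int.mul_emod n d 8
    rw [hn8, hd8] at m4
    have m3 := Int.mul_emod (n * d) (S ^ 2) 8
    rw [m4, hS8] at m3
    omega

set_option maxHeartbeats 2000000 in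
lemma stage1evenP (d n P Q R S : ℤ) (hd8 : d % 8 = 3 ∨ d % 8 = 7)
    (hn8 : n % 8 = 2 ∨ n % 8 = 6)
    (hPQ : P % 2 = Q % 2) (hR0 : R % 2 = 0) (hS0 : S % 2 = 0)
    (h4 : 8 ∣ P ^ 2 - d * Q ^ 2 + n * R ^ 2 - n * d * S ^ 2) :
    P % 2 = 0 := by
  rcases hn8 with hn8 | hn8 <;> rcases hd8 with hd8 | hd8 <;>
  rcases sq8 P with ⟨hP, hP8⟩ | ⟨hP, hP8⟩ | ⟨hP, hP8⟩ <;>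
  rcases sq8 Q with ⟨hQ, hQ8⟩ | ⟨hQ, hQ8⟩ | ⟨hQ, hQ8⟩ <;>
  rcases sq8 R with ⟨hR, hR8⟩ | ⟨hR, hR8⟩ | ⟨hR, hR8⟩ <;>
  rcases sq8 S with ⟨hS, hS8⟩ | ⟨hS, hS8⟩ | ⟨hS, hS8⟩ <;>
  · have m1 := Int.mul_emod d (Q ^ 2) 8
    rw [hd8, hQ8] at m1
    have m2 := Int.mul_emod n (R ^ 2) 8
    rw [hn8, hR8] at m2
    have m4 := Int.mul_emod n d 8
    rw [hn8, hd8] at m4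
    have m3 := Int.mul_emod (n * d) (S ^ 2) 8
    rw [m4, hS8] at m3
    omega

set_option maxHeartbeats 2000000 in
lemma keyAB (d n A B U V : ℤ) (hd : d % 4 = 3) (hn : n % 4 = 1 ∨ n % 4 = 2)
    (h4' : 2 ∣ A ^ 2 - d * B ^ 2 + n * U ^ 2 - n * d * V ^ 2)
    (hend : ¬((A ^ 2 - d * B ^ 2 + n * U ^ 2 - n * d * V ^ 2) % 4 = 2
        ∧ (A * B + n * (U * V)) % 2 = 0)
      ∧ ¬((A ^ 2 - d * B ^ 2 + n * U ^ 2 - n * d * V ^ 2) % 4 = 0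
        ∧ (A * B + n * (U * V)) % 2 = 1)) :
    A % 2 = B % 2 ∧ U % 2 = V % 2 := by
  rcases hn with hn4 | hn4
  · have hn2 : n % 2 = 1 := by omega
    have hnd4 := Int.mul_emod n d 4
    rw [hn4, hd] at hnd4
    rcases sq4 A with ⟨hA2, hA4⟩ | ⟨hA2, hA4⟩ <;> rcases sq4 B with ⟨hB2, hB4⟩ | ⟨hB2, hB4⟩ <;>
    rcases sq4 U with ⟨hU2, hU4⟩ | ⟨hU2, hU4⟩ <;> rcases sq4 V with ⟨hV2, hV4⟩ | ⟨hV2, hV4⟩ <;>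
    · have e1 := Int.mul_emod d (B ^ 2) 4
      rw [hd, hB4] at e1
      have e2 := Int.mul_emod n (U ^ 2) 4
      rw [hn4, hU4] at e2
      have e3 := Int.mul_emod (n * d) (V ^ 2) 4
      rw [hnd4, hV4] at e3
      have e4 := Int.mul_emod A B 2
      rw [hA2, hB2] at e4
      have e5 := Int.mul_emod U V 2
      rw [hU2, hV2] at e5
      have e6 := Int.mul_emod n (U * V) 2
      rw [hn2, e5] at e6
      omega
  · have hn2 : n % 2 = 0 := by omega
    have hnd4 := Int.mul_emod n d 4
    rw [hn4, hd] at hnd4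
    rcases sq4 A with ⟨hA2, hA4⟩ | ⟨hA2, hA4⟩ <;> rcases sq4 B with ⟨hB2, hB4⟩ | ⟨hB2, hB4⟩ <;>
    rcases sq4 U with ⟨hU2, hU4⟩ | ⟨hU2, hU4⟩ <;> rcases sq4 V with ⟨hV2, hV4⟩ | ⟨hV2, hV4⟩ <;>
    · have e1 := Int.mul_emod d (B ^ 2) 4
      rw [hd, hB4] at e1
      have e2 := Int.mul_emod n (U ^ 2) 4
      rw [hn4, hU4] at e2
      have e3 := Int.mul_emod (n * d) (V ^ 2) 4
      rw [hnd4, hV4] at e3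
      have e4 := Int.mul_emod A B 2
      rw [hA2, hB2] at e4
      have e5 := Int.mul_emod U V 2
      rw [hU2, hV2] at e5
      have e6 := Int.mul_emod n (U * V) 4
      rw [hn4] at e6
      omega

set_option maxHeartbeats 2000000 in
lemma arith (d n P Q R S : ℤ) (hd : d % 4 = 3) (hn : n % 4 = 1 ∨ n % 4 = 2)
    (h1 : 4 ∣ P ^ 2 + d * Q ^ 2)
    (h3 : 4 ∣ n * (R ^ 2 + d * S ^ 2))
    (h4 : 8 ∣ P ^ 2 - d * Q ^ 2 + n * R ^ 2 - n * d * S ^ 2)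
    (h5 : 4 ∣ P * Q + n * (R * S))
    (h6 : 256 ∣ (P ^ 2 - d * Q ^ 2 + n * R ^ 2 - n * d * S ^ 2) ^ 2
      + 4 * (d * (P * Q + n * (R * S)) ^ 2)) :
    (2 ∣ P ∧ 2 ∣ Q ∧ 2 ∣ R ∧ 2 ∣ S) ∧ 16 ∣ P ^ 2 + d * Q ^ 2 ∧ 16 ∣ R ^ 2 + d * S ^ 2 := by
  have hd2 : d % 2 = 1 := by omega
  have hd8 : d % 8 = 3 ∨ d % 8 = 7 := by omega
  have hPQ : P % 2 = Q % 2 := by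
    rcases sq4 P with ⟨hP, hP4⟩ | ⟨hP, hP4⟩ <;> rcases sq4 Q with ⟨hQ, hQ4⟩ | ⟨hQ, hQ4⟩ <;>
    · have m1 := Int.mul_emod d (Q ^ 2) 4
      rw [hd, hQ4] at m1
      omega
  have hRS : R % 2 = S % 2 := by
    rcases hn with hn4 | hn4 <;>
    rcases sq4 R with ⟨hR, hR4⟩ | ⟨hR, hR4⟩ <;> rcases sq4 S with ⟨hS, hS4⟩ | ⟨hS, hS4⟩ <;>
    · have m1 := Int.mul_emod d (S ^ 2) 4
      rw [hd, hS4] at m1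
      have m2 := Int.mul_emod n (R ^ 2 + d * S ^ 2) 4
      rw [hn4] at m2
      omega
  have hall : P % 2 = 0 ∧ Q % 2 = 0 ∧ R % 2 = 0 ∧ S % 2 = 0 := by
    rcases hn with hn4 | hn4
    · exact stage1odd d n P Q R S hd8 (by omega) hPQ hRS h4
    · have hR0 : R % 2 = 0 := by
        by_contra hR
        have hR1 : R % 2 = 1 := by omega
        have hS1 : S % 2 = 1 := by omega
        have hrs : R * S % 2 = 1 := oddmul R S hR1 hS1
        have m2 := Int.mul_emod n (R * S) 4
        rw [hn4] at m2
        rcases sq4 P with ⟨hP, _⟩ | ⟨hP, _⟩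
        · have hQ0 : Q % 2 = 0 := by omega
          obtain ⟨a, ha⟩ : ∃ a, P = 2 * a := ⟨P / 2, by omega⟩
          obtain ⟨b, hb⟩ : ∃ b, Q = 2 * b := ⟨Q / 2, by omega⟩
          have hpq : P * Q = 4 * (a * b) := by rw [ha, hb]; ring
          omega
        · have hQ1 : Q % 2 = 1 := by omega
          have hpq := oddmul P Q hP hQ1
          omega
      have hS0 : S % 2 = 0 := by omega
      have hP0 : P % 2 = 0 := stage1evenP d n P Q R S hd8 (by omega) hPQ hR0 hS0 h4
      exact ⟨hP0, by omega, hR0, hS0⟩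
  obtain ⟨hP0, hQ0, hR0, hS0⟩ := hall
  obtain ⟨A, hA⟩ : ∃ A, P = 2 * A := ⟨P / 2, by omega⟩
  obtain ⟨B, hB⟩ : ∃ B, Q = 2 * B := ⟨Q / 2, by omega⟩
  obtain ⟨U, hU⟩ : ∃ U, R = 2 * U := ⟨R / 2, by omega⟩
  obtain ⟨V, hV⟩ : ∃ V, S = 2 * V := ⟨S / 2, by omega⟩
  have h6' : 16 ∣ (A ^ 2 - d * B ^ 2 + n * U ^ 2 - n * d * V ^ 2) ^ 2
      + 4 * (d * (A * B + n * (U * V)) ^ 2) := by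
    have hEq : (P ^ 2 - d * Q ^ 2 + n * R ^ 2 - n * d * S ^ 2) ^ 2
        + 4 * (d * (P * Q + n * (R * S)) ^ 2)
        = 16 * ((A ^ 2 - d * B ^ 2 + n * U ^ 2 - n * d * V ^ 2) ^ 2
          + 4 * (d * (A * B + n * (U * V)) ^ 2)) := by
      rw [hA, hB, hU, hV]; ring
    omega
  have h4' : 2 ∣ A ^ 2 - d * B ^ 2 + n * U ^ 2 - n * d * V ^ 2 := by
    have hEq : P ^ 2 - d * Q ^ 2 + n * R ^ 2 - n * d * S ^ 2
        = 4 * (A ^ 2 - d * B ^ 2 + n * U ^ 2 - n * d * V ^ 2) := by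
      rw [hA, hB, hU, hV]; ring
    omega
  have hend := endgame d (A ^ 2 - d * B ^ 2 + n * U ^ 2 - n * d * V ^ 2)
    (A * B + n * (U * V)) hd h6'
  have key := keyAB d n A B U V hd hn h4' hend
  refine ⟨⟨⟨A, hA⟩, ⟨B, hB⟩, ⟨U, hU⟩, ⟨V, hV⟩⟩, ?_, ?_⟩
  · have hEq : P ^ 2 + d * Q ^ 2 = 4 * (A ^ 2 + d * B ^ 2) := by rw [hA, hB]; ring
    have h44 : 4 ∣ A ^ 2 + d * B ^ 2 := by
      rcases sq4 A with ⟨hA2, hA4⟩ | ⟨hA2, hA4⟩ <;> rcases sq4 B with ⟨hB2, hB4⟩ | ⟨hB2, hB4⟩ <;>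
      · have e1 := Int.mul_emod d (B ^ 2) 4
        rw [hd, hB4] at e1
        omega
    omega
  · have hEq : R ^ 2 + d * S ^ 2 = 4 * (U ^ 2 + d * V ^ 2) := by rw [hU, hV]; ring
    have h44 : 4 ∣ U ^ 2 + d * V ^ 2 := by
      rcases sq4 U with ⟨hU2, hU4⟩ | ⟨hU2, hU4⟩ <;> rcases sq4 V with ⟨hV2, hV4⟩ | ⟨hV2, hV4⟩ <;>
      · have e1 := Int.mul_emod d (V ^ 2) 4
        rw [hd, hV4] at e1
        omega
    omega


open Polynomial

lemma rat_int_of_sq_mul {m : ℕ} (hm : Squarefree m) (q : ℚ) {z : ℤ}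
    (h : (m : ℚ) * q ^ 2 = (z : ℚ)) : ∃ w : ℤ, q = (w : ℚ) := by
  have hq : ((q.num : ℚ)) = q * q.den := by
    rw [Rat.mul_den_eq_num]
  have hZ : (m : ℤ) * q.num ^ 2 = z * (q.den : ℤ) ^ 2 := by
    have : (m : ℚ) * (q.num : ℚ) ^ 2 = (z : ℚ) * (q.den : ℚ) ^ 2 := by
      rw [hq]; rw [← h]; ring
    exact_mod_cast this
  have hdvd : ((q.den : ℤ)) ^ 2 ∣ (m : ℤ) * q.num ^ 2 := ⟨z, by linarith [hZ]⟩
  have hdvdN : q.den ^ 2 ∣ m * q.num.natAbs ^ 2 := by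
    have := Int.natAbs_dvd_natAbs.mpr hdvd
    simpa [Int.natAbs_mul, Int.natAbs_pow] using this
  have hcop : (q.den ^ 2).Coprime (q.num.natAbs ^ 2) :=
    (q.reduced.symm.pow _ _)
  have hdm : q.den ^ 2 ∣ m := (Nat.Coprime.dvd_of_dvd_mul_right hcop) hdvdN
  have hden1 : q.den = 1 := by
    have := hm q.den (by rw [← pow_two]; exact hdm)
    exact Nat.isUnit_iff.mp this
  refine ⟨q.num, ?_⟩
  rw [← Rat.num_div_den q, hden1]
  simp

lemma rat_int_of_sq (q : ℚ) {z : ℤ} (h : q ^ 2 = (z : ℚ)) : ∃ w : ℤ, q = (w : ℚ) := by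
  apply rat_int_of_sq_mul squarefree_one q (z := z)
  push_cast
  linarith

section Conj
variable {K L : Type*} [Field K] [Field L] [Algebra K L]

lemma minpoly_sq (x : L) (c : K) (hx : x ^ 2 = algebraMap K L c)
    (hnsq : ∀ b : K, b ^ 2 ≠ c) : minpoly K x = X ^ 2 - C c := by
  have hirr : Irreducible (X ^ 2 - C c) :=
    X_pow_sub_C_irreducible_of_prime Nat.prime_two hnsq
  have hev : (Polynomial.aeval x) (X ^ 2 - C c) = 0 := by
    simp [hx]
  exact (minpoly.eq_of_irreducible_of_monic hirr hev
    (monic_X_pow_sub_C c (by norm_num))).symm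

lemma exists_conj (x : L) (c : K) (hx : x ^ 2 = algebraMap K L c)
    (hgen : Algebra.adjoin K {x} = ⊤) (hnsq : ∀ b : K, b ^ 2 ≠ c) :
    ∃ σ : L →ₐ[K] L, σ x = -x := by
  have hint : IsIntegral K x :=
    ⟨X ^ 2 - C c, monic_X_pow_sub_C c (by norm_num), by simp [hx]⟩
  let pb : PowerBasis K L := (Algebra.adjoin.powerBasis hint).map
    ((Subalgebra.equivOfEq _ _ hgen).trans Subalgebra.topEquiv)
  have hgen' : pb.gen = x := rfl
  have hmp : minpoly K pb.gen = X ^ 2 - C c := by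
    rw [hgen']; exact minpoly_sq x c hx hnsq
  have haev : (Polynomial.aeval (-x)) (minpoly K pb.gen) = 0 := by
    rw [hmp]; simp [hx]
  refine ⟨pb.lift (-x) haev, ?_⟩
  have := pb.lift_gen (-x) haev
  rwa [hgen'] at this

end Conj

section Rep
variable {K L : Type*} [Field K] [Field L] [Algebra K L]

lemma rep_of_adjoin (x : L) (c : K) (hx : x ^ 2 = algebraMap K L c)
    (hgen : Algebra.adjoin K {x} = ⊤) (y : L) :
    ∃ p q : K, y = algebraMap K L p + algebraMap K L q * x := by
  have hy : y ∈ Algebra.adjoin K ({x} : Set L) := by rw [hgen]; trivial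
  rw [Algebra.adjoin_singleton_eq_range_aeval] at hy
  obtain ⟨P, hP⟩ := hy
  have hmonic : (X ^ 2 - C c).Monic := monic_X_pow_sub_C c (by norm_num)
  have hg : (Polynomial.aeval x) (X ^ 2 - C c) = 0 := by simp [hx]
  have hmod : (Polynomial.aeval x) (P %ₘ (X ^ 2 - C c)) = y := by
    conv_rhs => rw [← hP, ← Polynomial.modByMonic_add_div P (X ^ 2 - C c)]
    simp [hg]
  set r := P %ₘ (X ^ 2 - C c) with hr
  have hdeg : r.degree ≤ 1 := by
    have h2 := Polynomial.degree_modByMonic_lt P hmonic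
    rw [Polynomial.degree_X_pow_sub_C (by norm_num)] at h2
    exact Order.le_of_lt_succ (by exact_mod_cast h2)
  have hrepr : r = C (r.coeff 1) * X + C (r.coeff 0) :=
    Polynomial.eq_X_add_C_of_degree_le_one hdeg
  refine ⟨r.coeff 0, r.coeff 1, ?_⟩
  rw [← hmod]
  conv_lhs => rw [hrepr]
  simp only [map_add, map_mul, Polynomial.aeval_C, Polynomial.aeval_X]
  ring

end Rep

section Fside
variable {F : Type*} [Field F] [CharZero F]

lemma algq (r : ℚ) : algebraMap ℚ F r = (r : F) := by rw [eq_ratCast]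

lemma indepF (d : ℕ) (hd0 : 0 < d) (sF : F) (hsF : sF ^ 2 = -(d : F)) (p q : ℚ)
    (h : (p : F) + (q : F) * sF = 0) : p = 0 ∧ q = 0 := by
  by_cases hq : q = 0
  · subst hq
    simp only [Rat.cast_zero, zero_mul, add_zero] at h
    exact ⟨by exact_mod_cast h, rfl⟩
  · exfalso
    have hq' : (q : F) ≠ 0 := by exact_mod_cast hq
    have hsFval : sF = ((-p / q : ℚ) : F) := by
      push_cast
      rw [eq_div_iff hq']
      linear_combination h
    have h1 : ((-p / q : ℚ) : F) ^ 2 = ((-(d : ℚ) : ℚ) : F) := by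
      rw [← hsFval, hsF]; push_cast; ring
    have h2 : (-p / q : ℚ) ^ 2 = -(d : ℚ) := by exact_mod_cast h1
    have hd' : (0 : ℚ) < d := by exact_mod_cast hd0
    nlinarith [sq_nonneg (-p / q : ℚ)]

end Fside

section Fint
variable {F : Type*} [Field F] [CharZero F]

lemma ratdesc (r : ℚ) (h : IsIntegral ℤ ((r : F))) : ∃ z : ℤ, r = (z : ℚ) := by
  have h2 : IsIntegral ℤ r := by
    apply IsIntegral.tower_bot (B := F) (algebraMap ℚ F).injective
    rwa [algq]
  obtain ⟨z, hz⟩ := IsIntegrallyClosed.isIntegral_iff.mp h2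
  exact ⟨z, by exact_mod_cast hz.symm⟩

lemma intF_mk (d : ℕ) (sF : F) (hsF : sF ^ 2 = -(d : F)) (p q : ℚ) (a b : ℤ)
    (ha : 2 * p = (a : ℚ)) (hb : p ^ 2 + d * q ^ 2 = (b : ℚ)) :
    IsIntegral ℤ ((p : F) + (q : F) * sF) := by
  refine ⟨X ^ 2 - C a * X + C b, ?_, ?_⟩
  · have hrepr : (X ^ 2 - C a * X + C b : ℤ[X]) = X ^ 2 + (C (-a) * X + C b) := by
      rw [map_neg]; ring
    rw [hrepr]
    exact Polynomial.monic_X_pow_add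
      ((Polynomial.degree_linear_le (a := -a) (b := b)).trans_lt (by norm_num))
  · rw [← Polynomial.aeval_def]
    simp only [map_add, map_sub, map_mul, map_pow, Polynomial.aeval_X, Polynomial.aeval_C]
    have haF : (algebraMap ℤ F a) = ((2 * p : ℚ) : F) := by
      rw [ha, eq_intCast (algebraMap ℤ F) a, Rat.cast_intCast]
    have hbF : (algebraMap ℤ F b) = ((p ^ 2 + d * q ^ 2 : ℚ) : F) := by
      rw [hb, eq_intCast (algebraMap ℤ F) b, Rat.cast_intCast]
    rw [haF, hbF]
    push_cast
    linear_combination ((q : ℚ) : F) ^ 2 * hsF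

lemma intF_char (d : ℕ) (hdsf : Squarefree d) (sF : F) (hsF : sF ^ 2 = -(d : F))
    (τ : F →ₐ[ℚ] F) (hτ : τ sF = -sF) (p q : ℚ)
    (h : IsIntegral ℤ ((p : F) + (q : F) * sF)) :
    (∃ a : ℤ, 2 * p = (a : ℚ)) ∧ (∃ w : ℤ, 2 * q = (w : ℚ)) ∧
      (∃ b : ℤ, p ^ 2 + d * q ^ 2 = (b : ℚ)) := by
  have hτp : τ ((p : F)) = (p : F) := map_ratCast τ p
  have hτq : τ ((q : F)) = (q : F) := map_ratCast τ q
  have hτx : τ ((p : F) + (q : F) * sF) = (p : F) - (q : F) * sF := by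
    rw [map_add, map_mul, hτ, hτp, hτq]; ring
  have hτint : IsIntegral ℤ ((p : F) - (q : F) * sF) := by
    rw [← hτx]
    exact h.map τ.toRingHom.toIntAlgHom
  have hsum : IsIntegral ℤ (((2 * p : ℚ) : F)) := by
    have e : ((p : F) + (q : F) * sF) + ((p : F) - (q : F) * sF) = ((2 * p : ℚ) : F) := by
      push_cast; ring
    rw [← e]
    exact h.add hτint
  obtain ⟨a, ha⟩ := ratdesc _ hsum
  have hprod : IsIntegral ℤ (((p ^ 2 + d * q ^ 2 : ℚ) : F)) := by
    have e : ((p : F) + (q : F) * sF) * ((p : F) - (q : F) * sF)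
        = ((p ^ 2 + d * q ^ 2 : ℚ) : F) := by
      push_cast
      linear_combination (-((q : ℚ) : F) ^ 2) * hsF
    rw [← e]
    exact h.mul hτint
  obtain ⟨b, hb⟩ := ratdesc _ hprod
  refine ⟨⟨a, ha⟩, ?_, ⟨b, hb⟩⟩
  have hq2 : (d : ℚ) * (2 * q) ^ 2 = ((4 * b - a ^ 2 : ℤ) : ℚ) := by
    push_cast
    linear_combination 4 * hb - (2 * p + (a : ℚ)) * ha
  exact rat_int_of_sq_mul hdsf (2 * q) hq2

end Fint

open NumberField Polynomial in
set_option maxHeartbeats 1000000 in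
set_option synthInstance.maxHeartbeats 400000 in
/-- Let `d > 3` and `n` be positive squarefree coprime integers with
`d ≡ 3 (mod 4)` and `n ≡ 1` or `2 (mod 4)`, `F = ℚ(√-d)` and `E = F(√-n)`.  Then
`O_E = O_F + O_F·√-n`. -/
theorem ring_of_integers_biquadratic {F E : Type*} [Field F] [NumberField F]
    [Field E] [NumberField E] [Algebra F E]
    (d n : ℕ) (hd3 : 3 < d) (hdsf : Squarefree d) (hn0 : 0 < n) (hnsf : Squarefree n)
    (hcop : Nat.Coprime d n) (hd4 : d % 4 = 3) (hn4 : n % 4 = 1 ∨ n % 4 = 2)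
    (sF : F) (hsF : sF ^ 2 = -(d : F)) (hgenF : Algebra.adjoin ℚ {sF} = ⊤)
    (t : E) (ht : t ^ 2 = -(n : E)) (hgenE : Algebra.adjoin F {t} = ⊤) :
    {x : E | ∃ a b : 𝓞 F, x = algebraMap F E (a : F) + algebraMap F E (b : F) * t}
      = {x : E | IsIntegral ℤ x} := by
  have hd0 : 0 < d := by omega
  have hsFq : sF ^ 2 = algebraMap ℚ F (-(d : ℚ)) := by
    rw [algq, hsF]; push_cast; ring
  have hnsqF : ∀ b : ℚ, b ^ 2 ≠ -(d : ℚ) := by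
    intro b hb
    have hd' : (0 : ℚ) < d := by exact_mod_cast hd0
    nlinarith [sq_nonneg b]
  obtain ⟨τ, hτ⟩ := exists_conj sF (-(d : ℚ)) hsFq hgenF hnsqF
  have repF : ∀ y : F, ∃ p q : ℚ, y = (p : F) + (q : F) * sF := by
    intro y
    obtain ⟨p, q, hy⟩ := rep_of_adjoin sF (-(d : ℚ)) hsFq hgenF y
    exact ⟨p, q, by rwa [algq, algq] at hy⟩
  have hnsqE : ∀ γ : F, γ ^ 2 ≠ -(n : F) := by
    intro γ hγ
    obtain ⟨u, v, rfl⟩ := repF γ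
    have hexp : ((u ^ 2 - d * v ^ 2 + n : ℚ) : F) + ((2 * u * v : ℚ) : F) * sF = 0 := by
      push_cast
      linear_combination hγ - ((v : ℚ) : F) ^ 2 * hsF
    obtain ⟨h1, h2⟩ := indepF d hd0 sF hsF _ _ hexp
    have huv : u * v = 0 := by linarith
    rcases mul_eq_zero.mp huv with hu | hv
    · have hdv : (d : ℚ) * v ^ 2 = ((n : ℤ) : ℚ) := by
        rw [hu] at h1; push_cast; linarith
      obtain ⟨w, hw⟩ := rat_int_of_sq_mul hdsf v hdv
      rw [hw] at hdv
      have hZ : (d : ℤ) * w ^ 2 = (n : ℤ) := by exact_mod_cast hdv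
      have hw0 : w ≠ 0 := by
        rintro rfl
        simp only [ne_eq, OfNat.ofNat_ne_zero, not_false_eq_true, zero_pow, mul_zero] at hZ
        omega
      have hdvd : (d : ℤ) ∣ (n : ℤ) := ⟨w ^ 2, hZ.symm⟩
      have hdn : d ∣ n := by exact_mod_cast hdvd
      have hone : d = 1 := hcop.eq_one_of_dvd hdn
      omega
    · rw [hv] at h1
      have hn' : (0 : ℚ) < n := by exact_mod_cast hn0
      nlinarith [sq_nonneg u]
  have htq : t ^ 2 = algebraMap F E (-(n : F)) := by
    rw [map_neg, map_natCast, ht]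
  obtain ⟨σ, hσ⟩ := exists_conj t (-(n : F)) htq hgenE hnsqE
  have repE := rep_of_adjoin t (-(n : F)) htq hgenE
  have tint : IsIntegral ℤ t := by
    refine ⟨X ^ 2 + C (n : ℤ), ?_, ?_⟩
    · exact Polynomial.monic_X_pow_add (Polynomial.degree_C_le.trans_lt (by norm_num))
    · rw [← Polynomial.aeval_def]
      simp only [map_add, map_pow, Polynomial.aeval_X, Polynomial.aeval_C, ht]
      rw [eq_intCast (algebraMap ℤ E)]
      push_cast
      ring
  ext x
  simp only [Set.mem_setOf_eq]
  constructor
  · rintro ⟨a, b, rfl⟩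
    have hmap : ∀ y : F, IsIntegral ℤ y → IsIntegral ℤ (algebraMap F E y) := fun y hy =>
      hy.map (algebraMap F E).toIntAlgHom
    exact (hmap _ (RingOfIntegers.isIntegral_coe a)).add
      ((hmap _ (RingOfIntegers.isIntegral_coe b)).mul tint)
  · intro hx
    obtain ⟨α, β, hxeq⟩ := repE x
    have hσx : σ x = algebraMap F E α - algebraMap F E β * t := by
      rw [hxeq, map_add, map_mul, hσ, AlgHom.commutes, AlgHom.commutes]; ring
    have hσint : IsIntegral ℤ (σ x) := hx.map σ.toRingHom.toIntAlgHom
    have desc : ∀ y : F, IsIntegral ℤ (algebraMap F E y) → IsIntegral ℤ y := fun y hy =>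
      IsIntegral.tower_bot (algebraMap F E).injective hy
    have I1 : IsIntegral ℤ (2 * α) := by
      apply desc
      have e : algebraMap F E (2 * α) = x + σ x := by
        rw [hσx, hxeq, map_mul, map_ofNat]; ring
      rw [e]; exact hx.add hσint
    have I2 : IsIntegral ℤ (α ^ 2 + n * β ^ 2) := by
      apply desc
      have e : algebraMap F E (α ^ 2 + n * β ^ 2) = x * σ x := by
        rw [hσx, hxeq, map_add, map_mul, map_pow, map_pow, map_natCast]
        linear_combination (algebraMap F E β) ^ 2 * ht
      rw [e]; exact hx.mul hσint
    have I4 : IsIntegral ℤ (4 * (n : F) * β ^ 2) := by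
      apply desc
      have e : algebraMap F E (4 * (n : F) * β ^ 2) = -((x - σ x) ^ 2) := by
        rw [hσx, hxeq, map_mul, map_mul, map_ofNat, map_natCast, map_pow]
        linear_combination (4 * (algebraMap F E β) ^ 2) * ht
      rw [e]
      exact ((hx.sub hσint).pow 2).neg
    obtain ⟨p, q, hα⟩ := repF α
    obtain ⟨r, s, hβ⟩ := repF β
    have c1 : 2 * α = ((2 * p : ℚ) : F) + ((2 * q : ℚ) : F) * sF := by
      rw [hα]; push_cast; ring
    have c2 : α ^ 2 + n * β ^ 2
        = ((p ^ 2 - d * q ^ 2 + n * r ^ 2 - n * d * s ^ 2 : ℚ) : F)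
          + ((2 * p * q + 2 * n * r * s : ℚ) : F) * sF := by
      rw [hα, hβ]; push_cast
      linear_combination (((q : ℚ) : F) ^ 2 + (n : F) * ((s : ℚ) : F) ^ 2) * hsF
    have c4 : 4 * (n : F) * β ^ 2
        = ((4 * n * (r ^ 2 - d * s ^ 2) : ℚ) : F) + ((8 * n * r * s : ℚ) : F) * sF := by
      rw [hβ]; push_cast
      linear_combination (4 * (n : F) * ((s : ℚ) : F) ^ 2) * hsF
    rw [c1] at I1
    rw [c2] at I2
    rw [c4] at I4
    obtain ⟨⟨a1, ha1⟩, ⟨a2, ha2⟩, ⟨a3, ha3⟩⟩ := intF_char d hdsf sF hsF τ hτ _ _ I1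
    obtain ⟨⟨e1, he1⟩, ⟨e2, he2⟩, ⟨e3, he3⟩⟩ := intF_char d hdsf sF hsF τ hτ _ _ I2
    obtain ⟨⟨f1, hf1⟩, ⟨f2, hf2⟩, ⟨f3, hf3⟩⟩ := intF_char d hdsf sF hsF τ hτ _ _ I4
    have hc4sq : (4 * (n : ℚ) * (r ^ 2 + d * s ^ 2)) ^ 2 = ((f3 : ℤ) : ℚ) := by
      rw [← hf3]; ring
    obtain ⟨f4, hf4⟩ := rat_int_of_sq _ hc4sq
    have hnR : (n : ℚ) * (4 * r) ^ 2 = ((f1 + 2 * f4 : ℤ) : ℚ) := by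
      push_cast
      linear_combination hf1 + 2 * hf4
    obtain ⟨R, hR⟩ := rat_int_of_sq_mul hnsf _ hnR
    have hndS : ((d * n : ℕ) : ℚ) * (4 * s) ^ 2 = ((2 * f4 - f1 : ℤ) : ℚ) := by
      push_cast
      linear_combination 2 * hf4 - hf1
    obtain ⟨S, hS⟩ := rat_int_of_sq_mul ((Nat.squarefree_mul hcop).mpr ⟨hdsf, hnsf⟩) _ hndS
    have EQ1 : a1 ^ 2 + (d : ℤ) * a2 ^ 2 = 4 * a3 := by
      exact_mod_cast (show ((a1 : ℤ) : ℚ) ^ 2 + (d : ℚ) * ((a2 : ℤ) : ℚ) ^ 2 = 4 * ((a3 : ℤ) : ℚ) by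
        rw [← ha1, ← ha2, ← ha3]; ring)
    have EQ3 : (n : ℤ) * (R ^ 2 + (d : ℤ) * S ^ 2) = 4 * f4 := by
      exact_mod_cast (show (n : ℚ) * (((R : ℤ) : ℚ) ^ 2 + (d : ℚ) * ((S : ℤ) : ℚ) ^ 2)
          = 4 * ((f4 : ℤ) : ℚ) by
        rw [← hR, ← hS, ← hf4]; push_cast; ring)
    have EQ4 : a1 ^ 2 - (d : ℤ) * a2 ^ 2 + (n : ℤ) * R ^ 2 - (n : ℤ) * (d : ℤ) * S ^ 2
        = 8 * e1 := by
      exact_mod_cast (show ((a1 : ℤ) : ℚ) ^ 2 - (d : ℚ) * ((a2 : ℤ) : ℚ) ^ 2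
          + (n : ℚ) * ((R : ℤ) : ℚ) ^ 2 - (n : ℚ) * (d : ℚ) * ((S : ℤ) : ℚ) ^ 2
          = 8 * ((e1 : ℤ) : ℚ) by
        rw [← ha1, ← ha2, ← hR, ← hS, ← he1]; ring)
    have EQ5 : a1 * a2 + (n : ℤ) * (R * S) = 4 * e2 := by
      exact_mod_cast (show ((a1 : ℤ) : ℚ) * ((a2 : ℤ) : ℚ)
          + (n : ℚ) * (((R : ℤ) : ℚ) * ((S : ℤ) : ℚ)) = 4 * ((e2 : ℤ) : ℚ) by
        rw [← ha1, ← ha2, ← hR, ← hS, ← he2]; ring)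
    have EQ6 : (a1 ^ 2 - (d : ℤ) * a2 ^ 2 + (n : ℤ) * R ^ 2 - (n : ℤ) * (d : ℤ) * S ^ 2) ^ 2
        + 4 * ((d : ℤ) * (a1 * a2 + (n : ℤ) * (R * S)) ^ 2) = 256 * e3 := by
      exact_mod_cast (show (((a1 : ℤ) : ℚ) ^ 2 - (d : ℚ) * ((a2 : ℤ) : ℚ) ^ 2
          + (n : ℚ) * ((R : ℤ) : ℚ) ^ 2 - (n : ℚ) * (d : ℚ) * ((S : ℤ) : ℚ) ^ 2) ^ 2
          + 4 * ((d : ℚ) * (((a1 : ℤ) : ℚ) * ((a2 : ℤ) : ℚ)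
            + (n : ℚ) * (((R : ℤ) : ℚ) * ((S : ℤ) : ℚ))) ^ 2) = 256 * ((e3 : ℤ) : ℚ) by
        rw [← ha1, ← ha2, ← hR, ← hS, ← he3]; ring)
    have hd4' : (d : ℤ) % 4 = 3 := by omega
    have hn4' : (n : ℤ) % 4 = 1 ∨ (n : ℤ) % 4 = 2 := by
      rcases hn4 with h | h
      · left; omega
      · right; omega
    obtain ⟨⟨hdP, hdQ, hdR, hdS⟩, hPQ16, hRS16⟩ :=
      arith (d : ℤ) (n : ℤ) a1 a2 R S hd4' hn4' ⟨a3, EQ1⟩ ⟨f4, EQ3⟩ ⟨e1, EQ4⟩ ⟨e2, EQ5⟩ ⟨e3, EQ6⟩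
    obtain ⟨P', hP'⟩ := hdP
    obtain ⟨R', hR'⟩ := hdR
    obtain ⟨zP, hzP⟩ := hPQ16
    obtain ⟨zR, hzR⟩ := hRS16
    have h2p : 2 * p = ((P' : ℤ) : ℚ) := by
      have hcast : ((a1 : ℤ) : ℚ) = 2 * ((P' : ℤ) : ℚ) := by exact_mod_cast hP'
      rw [← ha1] at hcast
      linarith
    have hpz : p ^ 2 + d * q ^ 2 = ((zP : ℤ) : ℚ) := by
      have hcast : ((a1 : ℤ) : ℚ) ^ 2 + (d : ℚ) * ((a2 : ℤ) : ℚ) ^ 2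
          = 16 * ((zP : ℤ) : ℚ) := by exact_mod_cast hzP
      rw [← ha1, ← ha2] at hcast
      linarith
    have h2r : 2 * r = ((R' : ℤ) : ℚ) := by
      have hcast : ((R : ℤ) : ℚ) = 2 * ((R' : ℤ) : ℚ) := by exact_mod_cast hR'
      rw [← hR] at hcast
      linarith
    have hrz : r ^ 2 + d * s ^ 2 = ((zR : ℤ) : ℚ) := by
      have hcast : ((R : ℤ) : ℚ) ^ 2 + (d : ℚ) * ((S : ℤ) : ℚ) ^ 2
          = 16 * ((zR : ℤ) : ℚ) := by exact_mod_cast hzR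
      rw [← hR, ← hS] at hcast
      linarith
    have hαint : IsIntegral ℤ α := by
      rw [hα]; exact intF_mk d sF hsF p q P' zP h2p hpz
    have hβint : IsIntegral ℤ β := by
      rw [hβ]; exact intF_mk d sF hsF r s R' zR h2r hrz
    exact ⟨⟨α, hαint⟩, ⟨β, hβint⟩, hxeq⟩
end

section
/- Let O be an order in a number field K with conductor f. For any α ∈ K^× such that αO ∈ J(O,f) (i.e., αO = a/b with a, b integral O-ideals coprime to f), there exist β, γ ∈ O with βO + f = O, γO + f = O, and αO = (βO)/(γO); in particular αO ∈ P(O,f). -/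
open NumberField
open scoped nonZeroDivisors

set_option maxHeartbeats 1000000
set_option synthInstance.maxHeartbeats 400000

/-- `J(O,f)`: the subgroup of invertible fractional `O`-ideals generated by the integral
ideals of `O` coprime to the conductor `f`. -/
noncomputable def JOf {K : Type*} [Field K] [NumberField K] (O : Subalgebra ℤ K) :
    Subgroup (FractionalIdeal (↥O)⁰ K)ˣ :=
  Subgroup.closure
    {u | ∃ a : Ideal O, a ⊔ condO O = ⊤ ∧ (u : FractionalIdeal (↥O)⁰ K) = a}

/-- `P(O,f)`: the subgroup generated by the principal ideals `α·O` with `α ∈ O` coprime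
to the conductor `f`. -/
noncomputable def POf {K : Type*} [Field K] [NumberField K] (O : Subalgebra ℤ K) :
    Subgroup (FractionalIdeal (↥O)⁰ K)ˣ :=
  Subgroup.closure
    {u | ∃ α : O, Ideal.span {α} ⊔ condO O = ⊤ ∧
      (u : FractionalIdeal (↥O)⁰ K) = (Ideal.span {α} : Ideal O)}

private lemma span_unit_aux {K : Type*} [Field K] [NumberField K]
    (O : Subalgebra ℤ K) [IsFractionRing ↥O K] (x : K) (hx : x ≠ 0) :
    FractionalIdeal.spanSingleton (↥O)⁰ x * FractionalIdeal.spanSingleton (↥O)⁰ x⁻¹ = 1 := by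
  rw [FractionalIdeal.spanSingleton_mul_spanSingleton, mul_inv_cancel₀ hx,
    FractionalIdeal.spanSingleton_one]

private lemma coe_span_aux {K : Type*} [Field K] [NumberField K]
    (O : Subalgebra ℤ K) [IsFractionRing ↥O K] (x : ↥O) :
    ((Ideal.span {x} : Ideal O) : FractionalIdeal (↥O)⁰ K)
      = FractionalIdeal.spanSingleton (↥O)⁰ (x : K) := by
  rw [FractionalIdeal.coeIdeal_span_singleton]
  rfl

private lemma helper_aux {K : Type*} [Field K] [NumberField K]
    (O : Subalgebra ℤ K) [IsFractionRing ↥O K]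
    (α : K) (hα : α ≠ 0) (β γ : ↥O) (hγ : (γ : K) ≠ 0)
    (hmul : α * (γ : K) = (β : K))
    (hβf : Ideal.span {β} ⊔ condO O = ⊤) (hγf : Ideal.span {γ} ⊔ condO O = ⊤) :
    (∃ β γ : O, Ideal.span {β} ⊔ condO O = ⊤ ∧ Ideal.span {γ} ⊔ condO O = ⊤ ∧
      FractionalIdeal.spanSingleton (↥O)⁰ α
          * ((Ideal.span {γ} : Ideal O) : FractionalIdeal (↥O)⁰ K)
        = ((Ideal.span {β} : Ideal O) : FractionalIdeal (↥O)⁰ K)) ∧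
    ∃ u : (FractionalIdeal (↥O)⁰ K)ˣ,
      (u : FractionalIdeal (↥O)⁰ K) = FractionalIdeal.spanSingleton (↥O)⁰ α ∧
      u ∈ POf O := by
  have hβ : (β : K) ≠ 0 := by
    rw [← hmul]; exact mul_ne_zero hα hγ
  have heq : FractionalIdeal.spanSingleton (↥O)⁰ α
      * ((Ideal.span {γ} : Ideal O) : FractionalIdeal (↥O)⁰ K)
      = ((Ideal.span {β} : Ideal O) : FractionalIdeal (↥O)⁰ K) := by
    rw [coe_span_aux, coe_span_aux, FractionalIdeal.spanSingleton_mul_spanSingleton, hmul]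
  refine ⟨⟨β, γ, hβf, hγf, heq⟩, ?_⟩
  set uβ : (FractionalIdeal (↥O)⁰ K)ˣ :=
    Units.mkOfMulEqOne _ _ (span_unit_aux O (β : K) hβ) with huβ
  set uγ : (FractionalIdeal (↥O)⁰ K)ˣ :=
    Units.mkOfMulEqOne _ _ (span_unit_aux O (γ : K) hγ) with huγ
  refine ⟨uβ * uγ⁻¹, ?_, ?_⟩
  · show (uβ : FractionalIdeal (↥O)⁰ K) * (uγ⁻¹ : (FractionalIdeal (↥O)⁰ K)ˣ) = _
    have h1 : (uβ : FractionalIdeal (↥O)⁰ K) = FractionalIdeal.spanSingleton (↥O)⁰ (β : K) := rfl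
    have h2 : ((uγ⁻¹ : (FractionalIdeal (↥O)⁰ K)ˣ) : FractionalIdeal (↥O)⁰ K)
        = FractionalIdeal.spanSingleton (↥O)⁰ ((γ : K)⁻¹) := rfl
    rw [h1, h2, FractionalIdeal.spanSingleton_mul_spanSingleton]
    congr 1
    field_simp [← hmul]
    rw [← hmul, mul_comm]
  · have hβmem : uβ ∈ POf O :=
      Subgroup.subset_closure ⟨β, hβf, by rw [coe_span_aux]; rfl⟩
    have hγmem : uγ ∈ POf O :=
      Subgroup.subset_closure ⟨γ, hγf, by rw [coe_span_aux]; rfl⟩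
    exact mul_mem hβmem (inv_mem hγmem)

/-- If `α ∈ K^×` and the principal fractional ideal `α·O` lies in
`J(O,f)` (i.e. `α·O = a/b` with `a, b` integral `O`-ideals coprime to the conductor `f`),
then there are `β, γ ∈ O` with `β·O` and `γ·O` coprime to `f` and `α·O = (β·O)/(γ·O)`;
in particular `α·O ∈ P(O,f)`. -/
theorem principal_in_jof_mem_pof {K : Type*} [Field K] [NumberField K]
    (O : Subalgebra ℤ K) (hO : IsOrder O) [IsFractionRing ↥O K]
    (α : K) (hα : α ≠ 0)
    (h : ∃ a b : Ideal O, a ⊔ condO O = ⊤ ∧ b ⊔ condO O = ⊤ ∧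
      FractionalIdeal.spanSingleton (↥O)⁰ α * (b : FractionalIdeal (↥O)⁰ K)
        = (a : FractionalIdeal (↥O)⁰ K)) :
    (∃ β γ : O, Ideal.span {β} ⊔ condO O = ⊤ ∧ Ideal.span {γ} ⊔ condO O = ⊤ ∧
      FractionalIdeal.spanSingleton (↥O)⁰ α
          * ((Ideal.span {γ} : Ideal O) : FractionalIdeal (↥O)⁰ K)
        = ((Ideal.span {β} : Ideal O) : FractionalIdeal (↥O)⁰ K)) ∧
    ∃ u : (FractionalIdeal (↥O)⁰ K)ˣ,
      (u : FractionalIdeal (↥O)⁰ K) = FractionalIdeal.spanSingleton (↥O)⁰ α ∧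
      u ∈ POf O := by
  obtain ⟨a, b, haf, hbf, hab⟩ := h
  -- get γ ∈ b with γ ≡ 1 mod f
  have h1 : (1 : ↥O) ∈ b ⊔ condO O := hbf ▸ Submodule.mem_top
  obtain ⟨γ, hγb, c, hcf, hγc⟩ := Submodule.mem_sup.mp h1
  have hγf : Ideal.span {γ} ⊔ condO O = ⊤ := by
    rw [Ideal.eq_top_iff_one]
    exact hγc ▸ Submodule.add_mem_sup (Ideal.subset_span rfl) hcf
  by_cases hγ0 : (γ : K) = 0
  · -- degenerate case: conductor is ⊤
    have hγz : γ = 0 := by exact_mod_cast hγ0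
    have hc1 : c = 1 := by rw [hγz, zero_add] at hγc; exact hγc
    have hf : condO O = ⊤ := (Ideal.eq_top_iff_one _).mpr (hc1 ▸ hcf)
    obtain ⟨x, y, hy, hxy⟩ := IsFractionRing.div_surjective (A := ↥O) α
    have hy0 : (y : K) ≠ 0 := by
      intro hz
      have : y = 0 := by exact_mod_cast hz
      exact nonZeroDivisors.ne_zero hy this
    have hmul : α * (y : K) = (x : K) := by
      have : (x : K) / (y : K) = α := hxy
      field_simp [← this]
      exact (eq_div_iff hy0).mp this.symm
    exact helper_aux O α hα x y hy0 hmul (by rw [hf, sup_top_eq]) (by rw [hf, sup_top_eq])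
  · -- main case: β := α·γ ∈ a
    have hαγ : α * (γ : K) ∈ (a : FractionalIdeal (↥O)⁰ K) := by
      rw [← hab]
      exact FractionalIdeal.mul_mem_mul
        (FractionalIdeal.mem_spanSingleton_self _ α)
        (by exact_mod_cast FractionalIdeal.mem_coeIdeal_of_mem _ hγb)
    obtain ⟨β, hβa, hβ⟩ := FractionalIdeal.mem_coeIdeal _ |>.mp hαγ
    have hmul : α * (γ : K) = (β : K) := hβ.symm
    -- ideal identity: span{β} * b = a * span{γ}
    have hideal : Ideal.span {β} * b = a * Ideal.span {γ} := by
      apply FractionalIdeal.coeIdeal_injective (K := K)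
      push_cast
      rw [coe_span_aux, coe_span_aux, ← hmul, ← FractionalIdeal.spanSingleton_mul_spanSingleton,
        mul_comm (FractionalIdeal.spanSingleton (↥O)⁰ α), mul_assoc, hab, mul_comm]
    have hβf : Ideal.span {β} ⊔ condO O = ⊤ := by
      by_contra hne
      obtain ⟨m, hm, hle⟩ := Ideal.exists_le_maximal _ hne
      have hfm : condO O ≤ m := le_trans le_sup_right hle
      have hβm : Ideal.span {β} ≤ m := le_trans le_sup_left hle
      have hprod : a * Ideal.span {γ} ≤ m :=
        hideal ▸ le_trans Ideal.mul_le_left hβm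
      rcases hm.isPrime.mul_le.mp hprod with h1 | h1
      · exact hm.ne_top (top_le_iff.mp (haf ▸ sup_le h1 hfm))
      · exact hm.ne_top (top_le_iff.mp (hγf ▸ sup_le h1 hfm))
    exact helper_aux O α hα β γ hγ0 hmul hβf hγf
end
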